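/- arXiv:1003.0934 — 4 statements merged into one kernel-verified Lean document; each statement's English description precedes it below -/
import Mathlib

section
/- Let n ≥ 2 be an integer, let x_0 < x_1 < ⋯ < x_n be real numbers, and write Δx_i = x_{i+1} − x_i. Let L : ℝ × ℝ × ℝ × ℝ × ℝ → ℝ, (s,t,u,v,w) ↦ L(s,t,u,v,w), admit continuous partial derivatives L_u = ∂L/∂u, L_v = ∂L/∂v, L_w = ∂L/∂w with respect to its last three arguments. For (y_0, y_1, …, y_n) ∈ ℝ^{n+1} define the discrete functional J(y_0,…,y_n) = Σ_{i=1}^{n} L(x_{i−1}, x_i, y_{i−1}, y_i, (y_i − y_{i−1})/Δx_{i−1}) · Δx_{i−1}. If ŷ = (ŷ_0, …, ŷ_n) with ŷ_0 = α and ŷ_n = β is a local extremum (a local minimum or a local maximum) of J among all (y_0,…,y_n) with y_0 = α and y_n = β, then the discrete Euler–Lagrange equations hold: for every i ∈ {1, …, n−1}, L_u(x_i, x_{i+1}, ŷ_i, ŷ_{i+1}, Δŷ_i/Δx_i) · (Δx_i/Δx_{i−1}) + L_v(x_{i−1}, x_i, ŷ_{i−1}, ŷ_i, Δŷ_{i−1}/Δx_{i−1})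 = [ L_w(x_i, x_{i+1}, ŷ_i, ŷ_{i+1}, Δŷ_i/Δx_i) − L_w(x_{i−1}, x_i, ŷ_{i−1}, ŷ_i, Δŷ_{i−1}/Δx_{i−1}) ] / Δx_{i−1}, where Δŷ_i = ŷ_{i+1} − ŷ_i. -/
open Filter Set Topology


/-- Chain rule along an affine path, using only existence of the two partial
derivatives and continuity of the first partial. -/
lemma key_affine_deriv (F Fv Fw : ℝ → ℝ → ℝ)
    (hFv : ∀ v w, HasDerivAt (fun v' => F v' w) (Fv v w) v)
    (hFw : ∀ v w, HasDerivAt (fun w' => F v w') (Fw v w) w)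
    (hFvC : Continuous fun p : ℝ × ℝ => Fv p.1 p.2)
    (a b z₀ : ℝ) :
    HasDerivAt (fun z => F z (a * z + b))
      (Fv z₀ (a * z₀ + b) + Fw z₀ (a * z₀ + b) * a) z₀ := by
  set w : ℝ → ℝ := fun z => a * z + b with hw
  have hwz : HasDerivAt w a z₀ := by
    simpa [hw] using ((hasDerivAt_id z₀).const_mul a).add_const b
  -- the part where only the second argument varies
  have H : HasDerivAt (fun z => F z₀ (w z)) (Fw z₀ (w z₀) * a) z₀ :=
    (hFw z₀ (w z₀)).comp z₀ hwz
  -- the part where the first argument varies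
  have G : HasDerivAt (fun z => F z (w z) - F z₀ (w z)) (Fv z₀ (w z₀)) z₀ := by
    rw [hasDerivAt_iff_tendsto_slope]
    -- mean value theorem selection
    have hsel : ∀ z : ℝ, z ≠ z₀ → ∃ ξ, ξ ∈ Set.Ioo (min z z₀) (max z z₀) ∧
        Fv ξ (w z) = (F z (w z) - F z₀ (w z)) / (z - z₀) := by
      intro z hz
      have hcont : ContinuousOn (fun v => F v (w z)) (Set.Icc (min z z₀) (max z z₀)) :=
        (continuous_iff_continuousAt.2 fun v => (hFv v (w z)).continuousAt).continuousOn
      rcases lt_or_gt_of_ne hz with h | h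
      · have hab : z < z₀ := h
        obtain ⟨c, hc, hceq⟩ := exists_hasDerivAt_eq_slope (fun v => F v (w z))
          (fun v => Fv v (w z)) hab
          (by simpa [min_eq_left hab.le, max_eq_right hab.le] using hcont)
          (fun v _ => hFv v (w z))
        refine ⟨c, by simpa [min_eq_left hab.le, max_eq_right hab.le] using hc, ?_⟩
        rw [hceq]
        rw [div_eq_div_iff (sub_ne_zero.2 hab.ne') (sub_ne_zero.2 hz)]
        ring
      · have hab : z₀ < z := h
        obtain ⟨c, hc, hceq⟩ := exists_hasDerivAt_eq_slope (fun v => F v (w z))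
          (fun v => Fv v (w z)) hab
          (by simpa [min_eq_right hab.le, max_eq_left hab.le] using hcont)
          (fun v _ => hFv v (w z))
        exact ⟨c, by simpa [min_eq_right hab.le, max_eq_left hab.le] using hc, by rw [hceq]⟩
    classical
    set ξ : ℝ → ℝ := fun z => if h : z ≠ z₀ then (hsel z h).choose else z₀ with hξ
    have hξmem : ∀ z : ℝ, z ≠ z₀ → ξ z ∈ Set.Ioo (min z z₀) (max z z₀) := by
      intro z hz; rw [hξ]; simp only [dif_pos hz]; exact (hsel z hz).choose_spec.1
    have hξeq : ∀ z : ℝ, z ≠ z₀ →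
        Fv (ξ z) (w z) = (F z (w z) - F z₀ (w z)) / (z - z₀) := by
      intro z hz; rw [hξ]; simp only [dif_pos hz]; exact (hsel z hz).choose_spec.2
    have hξtend : Tendsto ξ (𝓝[≠] z₀) (𝓝 z₀) := by
      rw [tendsto_iff_dist_tendsto_zero]
      apply squeeze_zero' (Eventually.of_forall fun z => dist_nonneg)
      · filter_upwards [self_mem_nhdsWithin] with z hz
        have hm := hξmem z hz
        have h1 : min z z₀ < ξ z := hm.1
        have h2 : ξ z < max z z₀ := hm.2
        have habs : max z z₀ - min z z₀ = |z - z₀| := by rw [max_sub_min_eq_abs, abs_sub_comm]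
        have hl : min z z₀ ≤ z₀ := min_le_right _ _
        have hr : z₀ ≤ max z z₀ := le_max_right _ _
        have : |ξ z - z₀| ≤ |z - z₀| := by
          rw [abs_le]
          constructor <;> [nlinarith [abs_nonneg (z - z₀)]; nlinarith [abs_nonneg (z - z₀)]]
        simpa [Real.dist_eq] using this
      · have : Tendsto (fun z : ℝ => dist z z₀) (𝓝 z₀) (𝓝 0) := by
          simpa using tendsto_iff_dist_tendsto_zero.1 (tendsto_id (x := 𝓝 z₀))
        exact this.mono_left nhdsWithin_le_nhds
    have hwt : Tendsto w (𝓝[≠] z₀) (𝓝 (w z₀)) :=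
      ((continuous_const.mul continuous_id).add continuous_const).continuousAt.tendsto.mono_left
        nhdsWithin_le_nhds
    have hFvt : Tendsto (fun z => Fv (ξ z) (w z)) (𝓝[≠] z₀) (𝓝 (Fv z₀ (w z₀))) := by
      have := (hFvC.tendsto (z₀, w z₀)).comp (hξtend.prodMk_nhds hwt)
      exact this
    refine hFvt.congr' ?_
    filter_upwards [self_mem_nhdsWithin] with z hz
    rw [slope_def_field]
    rw [hξeq z hz]
    simp [div_eq_div_iff (sub_ne_zero.2 hz) (sub_ne_zero.2 hz)]
  have := G.add H
  refine this.congr_of_eventuallyEq (Eventually.of_forall fun z => ?_)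
  simp only [Pi.add_apply]; ring


/-- Variant for a path `z ↦ (z, (z - c)/d)`. -/
lemma key_slope_deriv (F Fv Fw : ℝ → ℝ → ℝ)
    (hFv : ∀ v w, HasDerivAt (fun v' => F v' w) (Fv v w) v)
    (hFw : ∀ v w, HasDerivAt (fun w' => F v w') (Fw v w) w)
    (hFvC : Continuous fun p : ℝ × ℝ => Fv p.1 p.2)
    (c d : ℝ) (hd : d ≠ 0) (z₀ : ℝ) :
    HasDerivAt (fun z => F z ((z - c) / d))
      (Fv z₀ ((z₀ - c) / d) + Fw z₀ ((z₀ - c) / d) * (1 / d)) z₀ := by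
  have he : ∀ z : ℝ, (1 / d) * z + -(c / d) = (z - c) / d := by
    intro z; field_simp; ring
  have := key_affine_deriv F Fv Fw hFv hFw hFvC (1 / d) (-(c / d)) z₀
  simp only [he] at this
  exact this

/-- Guseinov's discrete Euler–Lagrange equations: if `yhat` is a local extremum of the
discrete functional `J y = ∑_{i=1}^{n} L(x_{i-1}, x_i, y_{i-1}, y_i,
(y_i - y_{i-1})/(x_i - x_{i-1})) · (x_i - x_{i-1})` among all `y` with `y 0 = α` and
`y n = β`, then the discrete Euler–Lagrange equations hold for `i = 1, …, n-1`. -/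


theorem guseinov_discrete_euler_lagrange
    (n : ℕ) (hn : 2 ≤ n)
    (x : ℕ → ℝ) (hx : ∀ i, i < n → x i < x (i + 1))
    (L Lu Lv Lw : ℝ → ℝ → ℝ → ℝ → ℝ → ℝ)
    (hLu : ∀ s t u v w, HasDerivAt (fun u' => L s t u' v w) (Lu s t u v w) u)
    (hLv : ∀ s t u v w, HasDerivAt (fun v' => L s t u v' w) (Lv s t u v w) v)
    (hLw : ∀ s t u v w, HasDerivAt (fun w' => L s t u v w') (Lw s t u v w) w)
    (hLuC : ∀ s t, Continuous fun p : ℝ × ℝ × ℝ => Lu s t p.1 p.2.1 p.2.2)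
    (hLvC : ∀ s t, Continuous fun p : ℝ × ℝ × ℝ => Lv s t p.1 p.2.1 p.2.2)
    (hLwC : ∀ s t, Continuous fun p : ℝ × ℝ × ℝ => Lw s t p.1 p.2.1 p.2.2)
    (α β : ℝ)
    (J : (ℕ → ℝ) → ℝ)
    (hJ : ∀ y : ℕ → ℝ, J y =
      ∑ i ∈ Finset.Icc 1 n,
        L (x (i - 1)) (x i) (y (i - 1)) (y i)
          ((y i - y (i - 1)) / (x i - x (i - 1))) * (x i - x (i - 1)))
    (yhat : ℕ → ℝ) (hyhat0 : yhat 0 = α) (hyhatn : yhat n = β)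
    (hext : IsLocalExtrOn J {y : ℕ → ℝ | y 0 = α ∧ y n = β} yhat) :
    ∀ i, 1 ≤ i → i ≤ n - 1 →
      Lu (x i) (x (i + 1)) (yhat i) (yhat (i + 1))
          ((yhat (i + 1) - yhat i) / (x (i + 1) - x i)) *
          ((x (i + 1) - x i) / (x i - x (i - 1))) +
        Lv (x (i - 1)) (x i) (yhat (i - 1)) (yhat i)
          ((yhat i - yhat (i - 1)) / (x i - x (i - 1))) =
        (Lw (x i) (x (i + 1)) (yhat i) (yhat (i + 1))
            ((yhat (i + 1) - yhat i) / (x (i + 1) - x i)) -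
          Lw (x (i - 1)) (x i) (yhat (i - 1)) (yhat i)
            ((yhat i - yhat (i - 1)) / (x i - x (i - 1)))) /
          (x i - x (i - 1)) := by
  intro i h1 h2
  classical
  have hi1 : i - 1 + 1 = i := by omega
  have hΔpos : x (i - 1) < x i := by
    have := hx (i - 1) (by omega); rwa [hi1] at this
  have hΔ'pos : x i < x (i + 1) := hx i (by omega)
  have hΔ : x i - x (i - 1) ≠ 0 := by linarith
  have hΔ' : x (i + 1) - x i ≠ 0 := by linarith
  set S : Set (ℕ → ℝ) := {y : ℕ → ℝ | y 0 = α ∧ y n = β} with hS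
  set φ : ℝ → (ℕ → ℝ) := fun z => Function.update yhat i z with hφ
  have hφcont : Continuous φ := by
    apply continuous_pi
    intro k
    simp only [hφ, Function.update_apply]
    by_cases hk : k = i
    · simpa [hk] using continuous_id'
    · simpa [hk] using continuous_const
  have hφmem : ∀ z, φ z ∈ S := by
    intro z
    constructor
    · rw [hφ]; simp only
      rw [Function.update_of_ne (by omega : (0 : ℕ) ≠ i)]; exact hyhat0
    · rw [hφ]; simp only
      rw [Function.update_of_ne (by omega : n ≠ i)]; exact hyhatn
  have hφ0 : φ (yhat i) = yhat := Function.update_eq_self i yhat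
  -- local extremum of the composed one-variable function
  have hext' : IsLocalExtr (J ∘ φ) (yhat i) := by
    have ht : Filter.Tendsto φ (nhds (yhat i)) (nhdsWithin yhat S) := by
      rw [tendsto_nhdsWithin_iff]
      refine ⟨by simpa [hφ0] using hφcont.tendsto (yhat i),
        Filter.Eventually.of_forall hφmem⟩
    have hext2 : IsExtrFilter J (nhdsWithin yhat S) (φ (yhat i)) := by
      rw [hφ0]; exact hext
    exact hext2.comp_tendsto ht
  -- the summands and their derivatives
  set A : ℕ → ℝ → ℝ := fun k z =>
    L (x (k - 1)) (x k) (φ z (k - 1)) (φ z k)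
      ((φ z k - φ z (k - 1)) / (x k - x (k - 1))) * (x k - x (k - 1)) with hA
  set Dv : ℝ :=
    (Lv (x (i - 1)) (x i) (yhat (i - 1)) (yhat i)
        ((yhat i - yhat (i - 1)) / (x i - x (i - 1))) +
      Lw (x (i - 1)) (x i) (yhat (i - 1)) (yhat i)
        ((yhat i - yhat (i - 1)) / (x i - x (i - 1))) * (1 / (x i - x (i - 1)))) *
      (x i - x (i - 1)) with hDv
  set Du : ℝ :=
    (Lu (x i) (x (i + 1)) (yhat i) (yhat (i + 1))
        ((yhat (i + 1) - yhat i) / (x (i + 1) - x i)) +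
      Lw (x i) (x (i + 1)) (yhat i) (yhat (i + 1))
        ((yhat (i + 1) - yhat i) / (x (i + 1) - x i)) * (1 / -(x (i + 1) - x i))) *
      (x (i + 1) - x i) with hDu
  set A' : ℕ → ℝ := fun k => if k = i then Dv else if k = i + 1 then Du else 0 with hA'
  have hAk : ∀ k ∈ Finset.Icc 1 n, HasDerivAt (A k) (A' k) (yhat i) := by
    intro k hk
    obtain ⟨hk1, hkn⟩ := Finset.mem_Icc.1 hk
    by_cases hki : k = i
    · subst hki
      have e1 : ∀ z : ℝ, φ z (k - 1) = yhat (k - 1) := fun z =>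
        Function.update_of_ne (by omega) _ _
      have e2 : ∀ z : ℝ, φ z k = z := fun z => Function.update_self _ _ _
      have hkey := (key_slope_deriv
          (fun v w => L (x (k - 1)) (x k) (yhat (k - 1)) v w)
          (fun v w => Lv (x (k - 1)) (x k) (yhat (k - 1)) v w)
          (fun v w => Lw (x (k - 1)) (x k) (yhat (k - 1)) v w)
          (fun v w => hLv _ _ _ v w) (fun v w => hLw _ _ _ v w)
          (((hLvC (x (k - 1)) (x k)).comp
            (continuous_const.prodMk continuous_id)) : _)
          (yhat (k - 1)) (x k - x (k - 1)) hΔ (yhat k)).mul_const (x k - x (k - 1))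
      have : A k = fun z =>
          L (x (k - 1)) (x k) (yhat (k - 1)) z ((z - yhat (k - 1)) / (x k - x (k - 1))) *
            (x k - x (k - 1)) := by
        funext z; rw [hA]; simp only [e1 z, e2 z]
      rw [this, hA']
      simpa [hDv] using hkey
    · by_cases hki1 : k = i + 1
      · subst hki1
        have ek : i + 1 - 1 = i := by omega
        have e1 : ∀ z : ℝ, φ z (i + 1 - 1) = z := by
          intro z; rw [ek]; exact Function.update_self _ _ _
        have e2 : ∀ z : ℝ, φ z (i + 1) = yhat (i + 1) := fun z =>
          Function.update_of_ne (by omega) _ _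
        have hrew : ∀ z : ℝ, (z - yhat (i + 1)) / -(x (i + 1) - x i) =
            (yhat (i + 1) - z) / (x (i + 1) - x i) := by
          intro z; rw [div_neg, ← neg_div, neg_sub]
        have hkey := (key_slope_deriv
            (fun u w => L (x i) (x (i + 1)) u (yhat (i + 1)) w)
            (fun u w => Lu (x i) (x (i + 1)) u (yhat (i + 1)) w)
            (fun u w => Lw (x i) (x (i + 1)) u (yhat (i + 1)) w)
            (fun u w => hLu _ _ u _ w) (fun u w => hLw _ _ u _ w)
            ((hLuC (x i) (x (i + 1))).comp
              ((continuous_fst).prodMk (continuous_const.prodMk continuous_snd)))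
            (yhat (i + 1)) (-(x (i + 1) - x i)) (neg_ne_zero.2 hΔ') (yhat i)).mul_const
            (x (i + 1) - x i)
        simp only [hrew] at hkey
        have e1' : ∀ z : ℝ, φ z i = z := fun z => Function.update_self _ _ _
        have : A (i + 1) = fun z =>
            L (x i) (x (i + 1)) z (yhat (i + 1))
              ((yhat (i + 1) - z) / (x (i + 1) - x i)) * (x (i + 1) - x i) := by
          funext z; rw [hA]; simp only [ek, e1' z, e2 z]
        rw [this, hA']
        simp only [if_neg (show i + 1 ≠ i by omega), if_pos rfl]
        simpa [hDu, hrew] using hkey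
      · have e1 : ∀ z : ℝ, φ z (k - 1) = yhat (k - 1) := fun z =>
          Function.update_of_ne (by omega) _ _
        have e2 : ∀ z : ℝ, φ z k = yhat k := fun z =>
          Function.update_of_ne (by omega) _ _
        have : A k = fun _ =>
            L (x (k - 1)) (x k) (yhat (k - 1)) (yhat k)
              ((yhat k - yhat (k - 1)) / (x k - x (k - 1))) * (x k - x (k - 1)) := by
          funext z; rw [hA]; simp only [e1 z, e2 z]
        rw [this]
        have hA'k : A' k = 0 := by simp [hA', hki, hki1]
        rw [hA'k]
        exact hasDerivAt_const _ _
  have hsum : HasDerivAt (J ∘ φ) (∑ k ∈ Finset.Icc 1 n, A' k) (yhat i) := by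
    have : (J ∘ φ) = fun z => ∑ k ∈ Finset.Icc 1 n, A k z := by
      funext z; simp only [Function.comp_apply, hJ (φ z), hA]
    rw [this]
    exact HasDerivAt.fun_sum hAk
  have hzero : (∑ k ∈ Finset.Icc 1 n, A' k) = 0 := hext'.hasDerivAt_eq_zero hsum
  have hsumval : (∑ k ∈ Finset.Icc 1 n, A' k) = Dv + Du := by
    have h1mem : i ∈ Finset.Icc 1 n := Finset.mem_Icc.2 ⟨h1, by omega⟩
    have h2mem : i + 1 ∈ Finset.Icc 1 n := Finset.mem_Icc.2 ⟨by omega, by omega⟩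
    have hsplit : ∀ k, A' k = (if k = i then Dv else 0) + (if k = i + 1 then Du else 0) := by
      intro k
      by_cases ha : k = i
      · subst ha; simp [hA', show k ≠ k + 1 by omega]
      · by_cases hb : k = i + 1 <;> simp [hA', ha, hb]
    rw [Finset.sum_congr rfl fun k _ => hsplit k, Finset.sum_add_distrib]
    rw [Finset.sum_ite_eq' (Finset.Icc 1 n) i fun _ => Dv,
      Finset.sum_ite_eq' (Finset.Icc 1 n) (i + 1) fun _ => Du,
      if_pos h1mem, if_pos h2mem]
  have hD : Dv + Du = 0 := by rw [← hsumval]; exact hzero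
  rw [hDv, hDu] at hD
  set a := Lu (x i) (x (i + 1)) (yhat i) (yhat (i + 1))
      ((yhat (i + 1) - yhat i) / (x (i + 1) - x i)) with ha
  set b := Lv (x (i - 1)) (x i) (yhat (i - 1)) (yhat i)
      ((yhat i - yhat (i - 1)) / (x i - x (i - 1))) with hb
  set c1 := Lw (x (i - 1)) (x i) (yhat (i - 1)) (yhat i)
      ((yhat i - yhat (i - 1)) / (x i - x (i - 1))) with hc1
  set c2 := Lw (x i) (x (i + 1)) (yhat i) (yhat (i + 1))
      ((yhat (i + 1) - yhat i) / (x (i + 1) - x i)) with hc2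
  have e1 : (b + c1 * (1 / (x i - x (i - 1)))) * (x i - x (i - 1))
      = b * (x i - x (i - 1)) + c1 := by
    field_simp
  have hΔ'' : (1 / -(x (i + 1) - x i)) * (x (i + 1) - x i) = -1 := by
    rw [div_mul_eq_mul_div, one_mul, div_neg, div_self hΔ']
  have e2 : (a + c2 * (1 / -(x (i + 1) - x i))) * (x (i + 1) - x i)
      = a * (x (i + 1) - x i) - c2 := by
    rw [add_mul, mul_assoc, hΔ'']; ring
  rw [e1, e2] at hD
  rw [eq_div_iff hΔ, add_mul, mul_assoc, div_mul_cancel₀ _ hΔ]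
  linarith
end

section
/- Let (y_n)_{n} be any sequence of Lipschitz functions y_n : [0,1] → ℝ with y_n(0) = 0 and y_n(1) = 1 such that y_n(x) → x^{1/3} as n → ∞ for almost every x ∈ [0,1]. Then I[y_n] → ∞ as n → ∞. -/
open MeasureTheory Filter

open Set Topology

lemma slope_seq_tendsto {F : ℝ → ℝ} {c L : ℝ} (hF : HasDerivAt F L c) {h : ℕ → ℝ}
    (hpos : ∀ k, 0 < h k) (hto : Tendsto h atTop (𝓝 0)) :
    Tendsto (fun k => (F (c + h k) - F c) / h k) atTop (𝓝 L) := by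
  have h1 := hasDerivAt_iff_tendsto_slope.1 hF
  have comp : Tendsto (fun k => c + h k) atTop (𝓝[≠] c) := by
    apply tendsto_nhdsWithin_of_tendsto_nhds_of_eventually_within
    · simpa using (tendsto_const_nhds.add hto)
    · exact Eventually.of_forall fun k => by
        simp only [mem_compl_iff, mem_singleton_iff]
        nlinarith [hpos k]
  have := h1.comp comp
  refine this.congr fun k => ?_
  simp [slope_def_field]

lemma lipschitz_ftc {g : ℝ → ℝ} {K : NNReal} (hg : LipschitzWith K g) {a b : ℝ} (hab : a ≤ b) :
    ∫ x in a..b, deriv g x = g b - g a := by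
  have gcont : Continuous g := hg.continuous
  set h : ℕ → ℝ := fun k => 1 / (k + 1) with hh
  have hpos : ∀ k, 0 < h k := fun k => by positivity
  have hto : Tendsto h atTop (𝓝 0) := tendsto_one_div_add_atTop_nhds_zero_nat
  -- Step 1 : DCT
  have step1 : Tendsto (fun k => ∫ x in a..b, (g (x + h k) - g x) / h k) atTop
      (𝓝 (∫ x in a..b, deriv g x)) := by
    apply intervalIntegral.tendsto_integral_filter_of_dominated_convergence (bound := fun _ => (K:ℝ))
    · exact Eventually.of_forall fun k =>
        (((gcont.comp (continuous_id.add continuous_const)).sub gcont).div_const _).aestronglyMeasurable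
    · refine Eventually.of_forall fun k => Eventually.of_forall fun x _ => ?_
      rw [Real.norm_eq_abs, abs_div, abs_of_pos (hpos k), div_le_iff₀ (hpos k)]
      calc |g (x + h k) - g x| ≤ K * |(x + h k) - x| := by
            simpa [Real.dist_eq] using hg.dist_le_mul (x + h k) x
        _ = K * h k := by rw [add_sub_cancel_left, abs_of_pos (hpos k)]
    · exact intervalIntegrable_const
    · have := hg.ae_differentiableAt_of_real (μ := volume)
      filter_upwards [this] with x hx _
      exact slope_seq_tendsto hx.hasDerivAt hpos hto
  -- Step 2 : rewrite the integral
  have step2 : ∀ k, ∫ x in a..b, (g (x + h k) - g x) / h k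
      = ((∫ x in b..(b + h k), g x) - ∫ x in a..(a + h k), g x) / h k := by
    intro k
    have i1 : ∀ c d : ℝ, IntervalIntegrable g volume c d := fun c d => gcont.intervalIntegrable c d
    have i2 : IntervalIntegrable (fun x => g (x + h k)) volume a b :=
      (gcont.comp (continuous_id.add continuous_const)).intervalIntegrable a b
    rw [intervalIntegral.integral_div, intervalIntegral.integral_sub i2 (i1 a b)]
    congr 1
    have e1 : ∫ x in a..b, g (x + h k) = ∫ x in (a + h k)..(b + h k), g x :=
      intervalIntegral.integral_comp_add_right g (h k)
    have a1 : (∫ x in a..(a + h k), g x) + ∫ x in (a + h k)..(b + h k), g x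
        = ∫ x in a..(b + h k), g x := intervalIntegral.integral_add_adjacent_intervals (i1 _ _) (i1 _ _)
    have a2 : (∫ x in a..b, g x) + ∫ x in b..(b + h k), g x
        = ∫ x in a..(b + h k), g x := intervalIntegral.integral_add_adjacent_intervals (i1 _ _) (i1 _ _)
    rw [e1]
    linarith
  -- Step 3 : the boundary terms converge
  have step3 : ∀ c : ℝ, Tendsto (fun k => (∫ x in c..(c + h k), g x) / h k) atTop (𝓝 (g c)) := by
    intro c
    have hF : HasDerivAt (fun u => ∫ x in c..u, g x) (g c) c :=
      intervalIntegral.integral_hasDerivAt_right (gcont.intervalIntegrable c c)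
        (gcont.stronglyMeasurable.stronglyMeasurableAtFilter) gcont.continuousAt
    have := slope_seq_tendsto hF hpos hto
    simpa using this
  have step4 : Tendsto (fun k => ∫ x in a..b, (g (x + h k) - g x) / h k) atTop
      (𝓝 (g b - g a)) := by
    have : Tendsto (fun k => ((∫ x in b..(b + h k), g x) / h k) - (∫ x in a..(a + h k), g x) / h k)
        atTop (𝓝 (g b - g a)) := (step3 b).sub (step3 a)
    refine this.congr fun k => ?_
    rw [step2 k, sub_div]
  exact tendsto_nhds_unique step1 step4

lemma pow_six_integral {m b : ℝ} (hmb : m ≤ b) {f : ℝ → ℝ} (hf : Measurable f) {C : ℝ}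
    (hbd : ∀ x, |f x| ≤ C) :
    (∫ x in m..b, f x) ^ 6 ≤ (b - m) ^ 5 * ∫ x in m..b, f x ^ 6 := by
  set μ := volume.restrict (Set.Ioc m b) with hμ
  have hμu : μ Set.univ = ENNReal.ofReal (b - m) := by
    rw [hμ, Measure.restrict_apply_univ, Real.volume_Ioc]
  have hfin : IsFiniteMeasure μ := by
    constructor; rw [hμu]; exact ENNReal.ofReal_lt_top
  have hpq : Real.HolderConjugate 6 (6/5) := Real.holderConjugate_iff.2 ⟨by norm_num, by norm_num⟩
  have habs : ∀ x, |f x| ^ (6:ℝ) = f x ^ 6 := by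
    intro x
    rw [show (6:ℝ) = ((6:ℕ):ℝ) by norm_num, Real.rpow_natCast, pow_abs,
      abs_of_nonneg (by positivity)]
  have hmem : MemLp (fun x => |f x|) (ENNReal.ofReal 6) μ :=
    MemLp.of_bound hf.abs.aestronglyMeasurable C
      (Eventually.of_forall fun x => by simpa [abs_abs] using hbd x)
  have hold := integral_mul_le_Lp_mul_Lq_of_nonneg (μ := μ) hpq
    (Eventually.of_forall fun x => abs_nonneg (f x))
    (Eventually.of_forall fun x => zero_le_one)
    hmem (memLp_const (1:ℝ))
  simp only [mul_one, Real.one_rpow, integral_const, smul_eq_mul] at hold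
  rw [measureReal_def, hμu, ENNReal.toReal_ofReal (by linarith)] at hold
  have hA : (0:ℝ) ≤ ∫ x, f x ^ 6 ∂μ := integral_nonneg fun x => by positivity
  have hint6 : ∫ x, |f x| ^ (6:ℝ) ∂μ = ∫ x, f x ^ 6 ∂μ := by
    exact integral_congr_ae (Eventually.of_forall fun x => habs x)
  rw [hint6] at hold
  have h1 : |∫ x, f x ∂μ| ≤ ∫ x, |f x| ∂μ := by
    simpa [Real.norm_eq_abs] using norm_integral_le_integral_norm (μ := μ) f
  have hL : (0:ℝ) ≤ b - m := by linarith
  have hiv : ∫ x in m..b, f x = ∫ x, f x ∂μ := intervalIntegral.integral_of_le hmb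
  have hiv6 : ∫ x in m..b, f x ^ 6 = ∫ x, f x ^ 6 ∂μ := intervalIntegral.integral_of_le hmb
  rw [hiv, hiv6]
  set I := ∫ x, f x ∂μ
  set A := ∫ x, f x ^ 6 ∂μ
  have e2 : (1/(6/5):ℝ) = 5/6 := by norm_num
  rw [e2] at hold
  have h2 : |I| ≤ A ^ (1/6:ℝ) * (b - m) ^ (5/6:ℝ) := le_trans h1 hold
  have h3 : I ^ 6 ≤ |I| ^ 6 := by
    rw [pow_abs]; exact le_abs_self _
  have h4 : |I| ^ 6 ≤ (A ^ (1/6:ℝ) * (b - m) ^ (5/6:ℝ)) ^ 6 :=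
    pow_le_pow_left₀ (abs_nonneg I) h2 6
  have h5 : (A ^ (1/6:ℝ) * (b - m) ^ (5/6:ℝ)) ^ 6 = (b - m) ^ 5 * A := by
    rw [mul_pow, ← Real.rpow_natCast (A ^ (1/6:ℝ)) 6, ← Real.rpow_natCast ((b - m) ^ (5/6:ℝ)) 6,
      ← Real.rpow_mul hA, ← Real.rpow_mul hL]
    norm_num
    ring
  linarith [h3, h5 ▸ h4]

lemma abs_deriv_le_of_lipschitz {g : ℝ → ℝ} {K : NNReal} (hg : LipschitzWith K g) (x : ℝ) :
    |deriv g x| ≤ K := by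
  rw [← Real.norm_eq_abs]; exact norm_deriv_le_of_lipschitz hg

lemma rpow_third_cube {x : ℝ} (hx : 0 ≤ x) : (x ^ (1/3 : ℝ)) ^ 3 = x := by
  rw [← Real.rpow_natCast (x ^ (1/3:ℝ)) 3, ← Real.rpow_mul hx]
  norm_num

set_option maxHeartbeats 2000000 in
lemma key_estimate {g : ℝ → ℝ} {K : NNReal} (hg : LipschitzWith K g) (hg0 : g 0 = 0)
    {b : ℝ} (hb0 : 0 < b) (hb1 : b ≤ 1)
    (hbe : ∀ x ∈ Set.Ico (0:ℝ) b, g x ≤ x ^ (1/3 : ℝ) / 2)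
    (hgb : b ^ (1/3 : ℝ) / 2 ≤ g b) :
    49 / 8000000 / b ≤ ∫ x in (0:ℝ)..1, (g x ^ 3 - x) ^ 2 * deriv g x ^ 6 := by
  set d := deriv g with hd
  have hdb : ∀ x, |d x| ≤ K := fun x => abs_deriv_le_of_lipschitz hg x
  set F : ℝ → ℝ := fun x => (g x ^ 3 - x) ^ 2 * d x ^ 6 with hF
  have hFnn : ∀ x, 0 ≤ F x := fun x => by positivity
  have hFmeas : Measurable F :=
    (((hg.continuous.measurable.pow_const 3).sub measurable_id).pow_const 2).mul
      ((measurable_deriv g).pow_const 6)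
  -- bound for F on [-1, 1]-ish region
  set Cb : ℝ := ((K:ℝ) ^ 3 + 1) ^ 2 * (K:ℝ) ^ 6 with hCb
  have hFbd : ∀ x ∈ Set.Icc (0:ℝ) 1, ‖F x‖ ≤ Cb := by
    intro x hx
    have hgx : |g x| ≤ K := by
      have := hg.dist_le_mul x 0
      rw [hg0, Real.dist_eq, Real.dist_eq, sub_zero, sub_zero] at this
      calc |g x| ≤ (K:ℝ) * |x| := this
        _ ≤ K * 1 := by
            have : |x| ≤ 1 := abs_le.2 ⟨by linarith [hx.1], hx.2⟩
            exact mul_le_mul_of_nonneg_left this K.2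
        _ = K := mul_one _
    have h1 : (g x ^ 3 - x) ^ 2 ≤ ((K:ℝ) ^ 3 + 1) ^ 2 := by
      have h2 : |g x ^ 3 - x| ≤ (K:ℝ) ^ 3 + 1 := by
        calc |g x ^ 3 - x| ≤ |g x ^ 3| + |x| := abs_sub _ _
          _ ≤ (K:ℝ) ^ 3 + 1 := by
              have : |g x ^ 3| = |g x| ^ 3 := (pow_abs _ _).symm
              have h3 : |g x| ^ 3 ≤ (K:ℝ) ^ 3 := pow_le_pow_left₀ (abs_nonneg _) hgx 3
              have h4 : |x| ≤ 1 := abs_le.2 ⟨by linarith [hx.1], hx.2⟩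
              linarith [this ▸ h3]
      calc (g x ^ 3 - x) ^ 2 = |g x ^ 3 - x| ^ 2 := (sq_abs _).symm
        _ ≤ ((K:ℝ) ^ 3 + 1) ^ 2 := pow_le_pow_left₀ (abs_nonneg _) h2 2
    have h5 : d x ^ 6 ≤ (K:ℝ) ^ 6 := by
      calc d x ^ 6 = |d x| ^ 6 := by
            rw [pow_abs, abs_of_nonneg (by positivity : (0:ℝ) ≤ d x ^ 6)]
        _ ≤ (K:ℝ) ^ 6 := pow_le_pow_left₀ (abs_nonneg _) (hdb x) 6
    rw [Real.norm_eq_abs, abs_of_nonneg (hFnn x)]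
    have := mul_le_mul h1 h5 (by positivity) (by positivity)
    exact this
  have hFint : IntegrableOn F (Set.Icc (0:ℝ) 1) volume := by
    refine Integrable.mono'
      (show IntegrableOn (fun _ => Cb) (Set.Icc (0:ℝ) 1) volume from
        integrableOn_const measure_Icc_lt_top.ne)
      hFmeas.aestronglyMeasurable ?_
    exact (ae_restrict_iff' measurableSet_Icc).2 (Eventually.of_forall hFbd)
  have hFiv : ∀ u v : ℝ, 0 ≤ u → u ≤ v → v ≤ 1 → IntervalIntegrable F volume u v := by
    intro u v hu huv hv
    rw [intervalIntegrable_iff_integrableOn_Ioc_of_le huv]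
    exact hFint.mono_set (fun x hx => ⟨by linarith [hx.1], by linarith [hx.2]⟩)
  set m := b / 2 with hm
  have hm0 : 0 < m := by positivity
  have hmb : m ≤ b := by simp [hm]; linarith
  -- step 1: restrict the integral
  have step1 : ∫ x in m..b, F x ≤ ∫ x in (0:ℝ)..1, F x := by
    have e1 : (∫ x in (0:ℝ)..m, F x) + ∫ x in m..b, F x = ∫ x in (0:ℝ)..b, F x :=
      intervalIntegral.integral_add_adjacent_intervals
        (hFiv 0 m le_rfl hm0.le (by linarith)) (hFiv m b hm0.le hmb hb1)
    have e2 : (∫ x in (0:ℝ)..b, F x) + ∫ x in b..1, F x = ∫ x in (0:ℝ)..1, F x :=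
      intervalIntegral.integral_add_adjacent_intervals
        (hFiv 0 b le_rfl hb0.le hb1) (hFiv b 1 hb0.le hb1 le_rfl)
    have p1 : 0 ≤ ∫ x in (0:ℝ)..m, F x :=
      intervalIntegral.integral_nonneg hm0.le (fun x _ => hFnn x)
    have p2 : 0 ≤ ∫ x in b..1, F x :=
      intervalIntegral.integral_nonneg hb1 (fun x _ => hFnn x)
    linarith
  -- integrability of d^6 on [m,b]
  have hd6int : IntervalIntegrable (fun x => d x ^ 6) volume m b := by
    rw [intervalIntegrable_iff_integrableOn_Ioc_of_le hmb]
    refine Integrable.mono'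
      (show IntegrableOn (fun _ => ((K:ℝ) ^ 6)) (Set.Ioc m b) volume from
        integrableOn_const measure_Ioc_lt_top.ne)
      ((measurable_deriv g).pow_const 6).aestronglyMeasurable ?_
    refine Eventually.of_forall fun x => ?_
    rw [Real.norm_eq_abs, abs_of_nonneg (by positivity)]
    calc d x ^ 6 = |d x| ^ 6 := by
          rw [pow_abs, abs_of_nonneg (by positivity : (0:ℝ) ≤ d x ^ 6)]
      _ ≤ (K:ℝ) ^ 6 := pow_le_pow_left₀ (abs_nonneg _) (hdb x) 6
  -- step 2: pointwise lower bound on (m, b)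
  have step2 : (49 * b ^ 2 / 256) * ∫ x in m..b, d x ^ 6 ≤ ∫ x in m..b, F x := by
    rw [← intervalIntegral.integral_const_mul]
    apply intervalIntegral.integral_mono_ae_restrict hmb
      (by exact (hd6int.const_mul _))
      (hFiv m b hm0.le hmb hb1)
    have h1 : ∀ᵐ x ∂(volume.restrict (Set.Icc m b)), x ∈ Set.Ioo m b := by
      rw [← Measure.restrict_congr_set Ioo_ae_eq_Icc]
      exact ae_restrict_mem measurableSet_Ioo
    filter_upwards [h1] with x hx
    have hx0 : 0 < x := lt_trans hm0 hx.1
    have hgx : g x ≤ x ^ (1/3:ℝ) / 2 := hbe x ⟨hx0.le, hx.2⟩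
    have hcube : g x ^ 3 ≤ x / 8 := by
      have h2 : g x ^ 3 ≤ (x ^ (1/3:ℝ) / 2) ^ 3 := by
        nlinarith [sq_nonneg (g x + x ^ (1/3:ℝ)/2), sq_nonneg (g x - x ^ (1/3:ℝ)/2)]
      have h3 : (x ^ (1/3:ℝ) / 2) ^ 3 = x / 8 := by
        rw [div_pow, rpow_third_cube hx0.le]; norm_num
      linarith
    have hsq : 49 * x ^ 2 / 64 ≤ (g x ^ 3 - x) ^ 2 := by nlinarith
    have hx2 : 49 * b ^ 2 / 256 ≤ 49 * x ^ 2 / 64 := by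
      have : m ≤ x := hx.1.le
      nlinarith [hx.1, hm0]
    have hd6 : (0:ℝ) ≤ d x ^ 6 := by positivity
    calc 49 * b ^ 2 / 256 * d x ^ 6 ≤ (g x ^ 3 - x) ^ 2 * d x ^ 6 :=
          mul_le_mul_of_nonneg_right (by linarith) hd6
      _ = F x := rfl
  -- step 3: Jensen + FTC
  have hJ : (g b - g m) ^ 6 ≤ (b - m) ^ 5 * ∫ x in m..b, d x ^ 6 := by
    have := pow_six_integral hmb (measurable_deriv g) hdb
    rwa [lipschitz_ftc hg hmb] at this
  -- step 4: lower bound on the increment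
  have hDelta : b ^ (1/3:ℝ) / 10 ≤ g b - g m := by
    have hgm : g m ≤ m ^ (1/3:ℝ) / 2 := hbe m ⟨hm0.le, by linarith⟩
    have hhalf : (m:ℝ) ^ (1/3:ℝ) ≤ (4/5) * b ^ (1/3:ℝ) := by
      have e1 : (m:ℝ) ^ (1/3:ℝ) = b ^ (1/3:ℝ) * (1/2:ℝ) ^ (1/3:ℝ) := by
        rw [hm, show b / 2 = b * (1/2) by ring, Real.mul_rpow hb0.le (by norm_num)]
      have e2 : ((1:ℝ)/2) ^ (1/3:ℝ) ≤ 4/5 := by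
        have h1 : (((1:ℝ)/2) ^ (1/3:ℝ)) ^ 3 = 1/2 := rpow_third_cube (by norm_num)
        have hu0 : (0:ℝ) ≤ ((1:ℝ)/2) ^ (1/3:ℝ) :=
          Real.rpow_nonneg (by norm_num) _
        nlinarith [h1, hu0, sq_nonneg (((1:ℝ)/2) ^ (1/3:ℝ)), mul_nonneg hu0 hu0]
      have hb13 : (0:ℝ) ≤ b ^ (1/3:ℝ) := Real.rpow_nonneg hb0.le _
      rw [e1]
      nlinarith
    linarith
  have hD6 : b ^ 2 / 1000000 ≤ (g b - g m) ^ 6 := by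
    have h1 : (b ^ (1/3:ℝ) / 10) ^ 6 ≤ (g b - g m) ^ 6 :=
      pow_le_pow_left₀ (by positivity) hDelta 6
    have h2 : (b ^ (1/3:ℝ) / 10) ^ 6 = b ^ 2 / 1000000 := by
      rw [div_pow, ← Real.rpow_natCast (b ^ (1/3:ℝ)) 6, ← Real.rpow_mul hb0.le]
      norm_num
    linarith
  -- combine
  set S := ∫ x in m..b, d x ^ 6 with hS
  set T := ∫ x in m..b, F x with hT
  have hSnn : 0 ≤ S :=
    intervalIntegral.integral_nonneg hmb (fun x _ => by positivity)
  have h2 : 32 ≤ 1000000 * (b ^ 3 * S) := by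
    have : b ^ 2 / 1000000 ≤ (b - m) ^ 5 * S := le_trans hD6 hJ
    rw [hm] at this
    nlinarith [pow_pos hb0 2, sq_nonneg b]
  rw [div_le_iff₀ hb0]
  have h3 : (49 * b ^ 2 / 256) * S * b ≤ T * b :=
    mul_le_mul_of_nonneg_right step2 hb0.le
  have h4 : T * b ≤ (∫ x in (0:ℝ)..1, F x) * b := mul_le_mul_of_nonneg_right step1 hb0.le
  nlinarith [h3, h2, h4]

/-- The Manià functional `I[y] = ∫₀¹ (y(x)³ - x)² (y'(x))⁶ dx`. -/
noncomputable def maniaFunctional (y : ℝ → ℝ) : ℝ :=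
  ∫ x in (0:ℝ)..1, (y x ^ 3 - x) ^ 2 * deriv y x ^ 6


set_option maxHeartbeats 1000000 in
/-- Ferriero's theorem: for any sequence of Lipschitz trajectories `yₙ : [0,1] → ℝ` with
`yₙ(0) = 0` and `yₙ(1) = 1` converging almost everywhere on `[0,1]` to `ŷ(x) = x^(1/3)`,
the Manià functional `I[yₙ]` tends to `∞`. -/
theorem mania_blowup_along_lipschitz_sequences
    (y : ℕ → ℝ → ℝ)
    (hLip : ∀ n, ∃ K : NNReal, LipschitzOnWith K (y n) (Set.Icc (0:ℝ) 1))
    (h0 : ∀ n, y n 0 = 0) (h1 : ∀ n, y n 1 = 1)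
    (hconv : ∀ᵐ x ∂(volume.restrict (Set.Icc (0:ℝ) 1)),
      Tendsto (fun n => y n x) atTop (nhds (x ^ (1/3 : ℝ)))) :
    Tendsto (fun n => maniaFunctional (y n)) atTop atTop := by
  choose K hK using hLip
  have hext : ∀ n, ∃ g : ℝ → ℝ, LipschitzWith (K n) g ∧ Set.EqOn (y n) g (Set.Icc 0 1) :=
    fun n => (hK n).extend_real
  choose g hgL hgE using hext
  have h01 : (0:ℝ) ∈ Set.Icc (0:ℝ) 1 := by norm_num
  have h11 : (1:ℝ) ∈ Set.Icc (0:ℝ) 1 := by norm_num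
  have hg0 : ∀ n, g n 0 = 0 := fun n => by rw [← hgE n h01, h0 n]
  have hg1 : ∀ n, g n 1 = 1 := fun n => by rw [← hgE n h11, h1 n]
  have hK1 : ∀ n, (1:ℝ) ≤ K n := by
    intro n
    have := (hgL n).dist_le_mul 1 0
    rw [hg0 n, hg1 n] at this
    simpa [Real.dist_eq] using this
  have hKpos : ∀ n, (0:ℝ) < K n := fun n => lt_of_lt_of_le one_pos (hK1 n)
  -- express the functional via the extension
  have hmania : ∀ n, maniaFunctional (y n)
      = ∫ x in (0:ℝ)..1, (g n x ^ 3 - x) ^ 2 * deriv (g n) x ^ 6 := by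
    intro n
    apply intervalIntegral.integral_congr_ae
    have hnull : ∀ᵐ x : ℝ ∂volume, x ≠ 1 := by
      rw [ae_iff]
      simpa using measure_singleton (1:ℝ)
    filter_upwards [hnull] with x hx1 hxI
    rw [Set.uIoc_of_le (by norm_num : (0:ℝ) ≤ 1)] at hxI
    have hxo : x ∈ Set.Ioo (0:ℝ) 1 := ⟨hxI.1, lt_of_le_of_ne hxI.2 hx1⟩
    have hev : y n =ᶠ[𝓝 x] g n := by
      filter_upwards [Icc_mem_nhds hxo.1 hxo.2] with z hz using hgE n hz
    rw [hgE n ⟨hxo.1.le, hxo.2.le⟩, hev.deriv_eq]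
  -- the "smallness" scale
  set c : ℕ → ℝ := fun n => min 1 ((1 / (2 * (K n : ℝ))) ^ (3/2 : ℝ)) with hc
  have hcpos : ∀ n, 0 < c n := by
    intro n
    apply lt_min one_pos
    apply Real.rpow_pos_of_pos
    have := hKpos n
    positivity
  have hc1 : ∀ n, c n ≤ 1 := fun n => min_le_left _ _
  have small_x : ∀ n, ∀ x : ℝ, 0 ≤ x → x ≤ c n → g n x ≤ x ^ (1/3:ℝ) / 2 := by
    intro n x hx0 hxc
    rcases eq_or_lt_of_le hx0 with rfl | hx0'
    · rw [hg0 n, Real.zero_rpow (by norm_num : (1/3:ℝ) ≠ 0)]; norm_num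
    · have hgx : g n x ≤ (K n : ℝ) * x := by
        have := (hgL n).dist_le_mul x 0
        rw [hg0 n, Real.dist_eq, Real.dist_eq, sub_zero, sub_zero, abs_of_pos hx0'] at this
        exact le_trans (le_abs_self _) this
      have h23 : x ^ (2/3:ℝ) ≤ 1 / (2 * (K n:ℝ)) := by
        have h1 : x ^ (2/3:ℝ) ≤ ((1 / (2 * (K n:ℝ))) ^ (3/2:ℝ)) ^ (2/3:ℝ) :=
          Real.rpow_le_rpow hx0 (le_trans hxc (min_le_right _ _)) (by norm_num)
        have h2 : ((1 / (2 * (K n:ℝ))) ^ (3/2:ℝ)) ^ (2/3:ℝ) = 1 / (2 * (K n:ℝ)) := by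
          rw [← Real.rpow_mul (by positivity)]
          norm_num
        linarith
      have hxsplit : x = x ^ (2/3:ℝ) * x ^ (1/3:ℝ) := by
        rw [← Real.rpow_add hx0']
        norm_num
      have h13 : (0:ℝ) ≤ x ^ (1/3:ℝ) := Real.rpow_nonneg hx0 _
      have h3 : (K n:ℝ) * x ≤ x ^ (1/3:ℝ) / 2 := by
        have h5 : (K n:ℝ) * x ^ (2/3:ℝ) ≤ 1/2 := by
          have hKne : (K n:ℝ) ≠ 0 := (hKpos n).ne'
          have := mul_le_mul_of_nonneg_left h23 (hKpos n).le
          calc (K n:ℝ) * x ^ (2/3:ℝ) ≤ (K n:ℝ) * (1 / (2 * (K n:ℝ))) := this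
            _ = 1/2 := by field_simp
        have h6 : (K n:ℝ) * x = ((K n:ℝ) * x ^ (2/3:ℝ)) * x ^ (1/3:ℝ) := by
          conv_lhs => rw [hxsplit]
          ring
        rw [h6]
        calc ((K n:ℝ) * x ^ (2/3:ℝ)) * x ^ (1/3:ℝ) ≤ (1/2) * x ^ (1/3:ℝ) :=
              mul_le_mul_of_nonneg_right h5 h13
          _ = x ^ (1/3:ℝ) / 2 := by ring
      linarith
  -- the crossing set and crossing point
  set S : ℕ → Set ℝ := fun n =>
    Set.Icc (c n) 1 ∩ {x | x ^ (1/3:ℝ) ≤ 2 * g n x} with hSdef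
  have hSclosed : ∀ n, IsClosed (S n) :=
    fun n => isClosed_Icc.inter
      (isClosed_le (Real.continuous_rpow_const (by norm_num))
        (continuous_const.mul (hgL n).continuous))
  have hSne : ∀ n, (S n).Nonempty := by
    intro n
    refine ⟨1, ⟨⟨hc1 n, le_rfl⟩, ?_⟩⟩
    rw [Set.mem_setOf_eq, Real.one_rpow, hg1 n]
    norm_num
  have hSbdd : ∀ n, BddBelow (S n) :=
    fun n => ⟨c n, fun x hx => hx.1.1⟩
  set b : ℕ → ℝ := fun n => sInf (S n) with hb
  have hbS : ∀ n, b n ∈ S n := fun n => (hSclosed n).csInf_mem (hSne n) (hSbdd n)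
  have hb0 : ∀ n, 0 < b n := fun n => lt_of_lt_of_le (hcpos n) (hbS n).1.1
  have hb1 : ∀ n, b n ≤ 1 := fun n => (hbS n).1.2
  have hbe : ∀ n, ∀ x ∈ Set.Ico (0:ℝ) (b n), g n x ≤ x ^ (1/3:ℝ) / 2 := by
    intro n x hx
    rcases le_or_gt x (c n) with hxc | hxc
    · exact small_x n x hx.1 hxc
    · by_contra hcon
      push_neg at hcon
      have hxS : x ∈ S n := by
        refine ⟨⟨hxc.le, le_trans hx.2.le (hb1 n)⟩, ?_⟩
        rw [Set.mem_setOf_eq]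
        linarith
      exact absurd (csInf_le (hSbdd n) hxS) (not_le.2 hx.2)
  have hgb : ∀ n, (b n) ^ (1/3:ℝ) / 2 ≤ g n (b n) := by
    intro n
    have := (hbS n).2
    rw [Set.mem_setOf_eq] at this
    linarith
  -- the key lower bound
  have hlow : ∀ n, 49 / 8000000 * (b n)⁻¹ ≤ maniaFunctional (y n) := by
    intro n
    rw [hmania n, ← div_eq_mul_inv]
    exact key_estimate (hgL n) (hg0 n) (hb0 n) (hb1 n) (hbe n) (hgb n)
  -- b n → 0
  have hbsmall : ∀ ε : ℝ, 0 < ε → ∀ᶠ n in atTop, b n < ε := by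
    intro ε hε
    set ε' := min ε 1 with hε'
    have hε'0 : 0 < ε' := lt_min hε one_pos
    have hε'1 : ε' ≤ 1 := min_le_right _ _
    -- find a good point x₀ in (0, ε')
    obtain ⟨x₀, hx₀I, hx₀P⟩ : ∃ x₀, x₀ ∈ Set.Ioo (0:ℝ) ε' ∧
        Tendsto (fun n => y n x₀) atTop (𝓝 (x₀ ^ (1/3:ℝ))) := by
      by_contra hcon
      push_neg at hcon
      have hsub : Set.Ioo (0:ℝ) ε' ⊆
          {x | ¬ Tendsto (fun n => y n x) atTop (𝓝 (x ^ (1/3:ℝ)))} :=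
        fun x hx => hcon x hx
      have h0' : volume.restrict (Set.Icc (0:ℝ) 1)
          {x | ¬ Tendsto (fun n => y n x) atTop (𝓝 (x ^ (1/3:ℝ)))} = 0 := hconv
      have h1' : volume.restrict (Set.Icc (0:ℝ) 1) (Set.Ioo (0:ℝ) ε') = 0 :=
        measure_mono_null hsub h0'
      rw [Measure.restrict_apply' measurableSet_Icc] at h1'
      have : Set.Ioo (0:ℝ) ε' ∩ Set.Icc 0 1 = Set.Ioo (0:ℝ) ε' := by
        apply Set.inter_eq_self_of_subset_left
        intro z hz
        exact ⟨hz.1.le, le_trans hz.2.le hε'1⟩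
      rw [this, Real.volume_Ioo] at h1'
      simp only [ENNReal.ofReal_eq_zero] at h1'
      linarith
    have hx₀Icc : x₀ ∈ Set.Icc (0:ℝ) 1 := ⟨hx₀I.1.le, le_trans hx₀I.2.le hε'1⟩
    have hx₀g : ∀ n, y n x₀ = g n x₀ := fun n => hgE n hx₀Icc
    have hlim : Tendsto (fun n => g n x₀) atTop (𝓝 (x₀ ^ (1/3:ℝ))) := by
      refine hx₀P.congr fun n => hx₀g n
    have hhalf : x₀ ^ (1/3:ℝ) / 2 < x₀ ^ (1/3:ℝ) := by
      have : 0 < x₀ ^ (1/3:ℝ) := Real.rpow_pos_of_pos hx₀I.1 _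
      linarith
    have hev : ∀ᶠ n in atTop, x₀ ^ (1/3:ℝ) / 2 < g n x₀ :=
      hlim.eventually_const_lt hhalf
    filter_upwards [hev] with n hn
    have hx₀S : x₀ ∈ S n := by
      have hcx : c n ≤ x₀ := by
        by_contra hcc
        push_neg at hcc
        have := small_x n x₀ hx₀I.1.le hcc.le
        linarith
      refine ⟨⟨hcx, hx₀Icc.2⟩, ?_⟩
      rw [Set.mem_setOf_eq]
      linarith
    calc b n ≤ x₀ := csInf_le (hSbdd n) hx₀S
      _ < ε' := hx₀I.2
      _ ≤ ε := min_le_left _ _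
  have hbto : Tendsto b atTop (𝓝[>] (0:ℝ)) := by
    rw [tendsto_nhdsWithin_iff]
    constructor
    · refine tendsto_order.2 ⟨fun a ha => ?_, fun a ha => hbsmall a ha⟩
      exact Eventually.of_forall fun n => lt_of_lt_of_le ha (hb0 n).le
    · exact Eventually.of_forall fun n => hb0 n
  have hinv : Tendsto (fun n => (b n)⁻¹) atTop atTop := hbto.inv_tendsto_nhdsGT_zero
  have hfin : Tendsto (fun n => 49 / 8000000 * (b n)⁻¹) atTop atTop :=
    Tendsto.const_mul_atTop (by norm_num) hinv
  exact tendsto_atTop_mono hlow hfin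
end

section
/- There exists a constant c > 0 such that I[y] ≥ c for every Lipschitz function y : [0,1] → ℝ with y(0) = 0 and y(1) = 1. Consequently, the infimum of I over Lipschitz admissible functions is strictly greater than the infimum of I over absolutely continuous admissible functions, which equals 0; that is, the Manià functional exhibits the Lavrentiev phenomenon. -/
set_option maxHeartbeats 1000000

open MeasureTheory Set Filter Topology

/-- `y : ℝ → ℝ` is absolutely continuous on `[0,1]`: it is the indefinite integral of an
integrable function `g` (its almost-everywhere derivative). -/
def IsAbsContOnUnitInterval (y : ℝ → ℝ) : Prop :=
  ∃ g : ℝ → ℝ, IntegrableOn g (Set.Icc (0:ℝ) 1) ∧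
    ∀ x ∈ Set.Icc (0:ℝ) 1, y x = y 0 + ∫ t in (0:ℝ)..x, g t

lemma slope_seq {g : ℝ → ℝ} {c d : ℝ} (hg : HasDerivAt g d c) :
    Tendsto (fun n : ℕ => (g (c + 1/(n+1)) - g c) / (1/(n+1) : ℝ)) atTop (𝓝 d) := by
  have hs := hasDerivAt_iff_tendsto_slope.mp hg
  have h0 : Tendsto (fun n : ℕ => (1:ℝ)/(n+1)) atTop (𝓝 0) :=
    tendsto_one_div_add_atTop_nhds_zero_nat
  have hu : Tendsto (fun n : ℕ => c + 1/(n+1)) atTop (𝓝[≠] c) := by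
    apply tendsto_nhdsWithin_of_tendsto_nhds_of_eventually_within
    · simpa using tendsto_const_nhds.add h0
    · refine Eventually.of_forall fun n => ?_
      have : (0:ℝ) < 1/(n+1) := by positivity
      simp only [mem_compl_iff, mem_singleton_iff]
      intro h
      nlinarith [this, h]
  have hcomp := hs.comp hu
  convert hcomp using 2 with n
  simp [slope_def_field, add_sub_cancel_left]

lemma lipschitz_integral_deriv {K : NNReal} {f : ℝ → ℝ} (hf : LipschitzWith K f)
    {a b : ℝ} (hab : a ≤ b) : ∫ x in a..b, deriv f x = f b - f a := by
  have hcont : Continuous f := hf.continuous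
  set h : ℕ → ℝ := fun n => 1/(n+1) with hh
  have hpos : ∀ n : ℕ, 0 < h n := fun n => by positivity
  set φ : ℕ → ℝ → ℝ := fun n x => (f (x + h n) - f x) / h n with hφ
  have hφc : ∀ n, Continuous (φ n) :=
    fun n => ((hcont.comp (continuous_id.add continuous_const)).sub hcont).div_const _
  -- dominated convergence
  have hmeas : ∀ n, AEStronglyMeasurable (φ n) (volume.restrict (Set.Ioc a b)) :=
    fun n => (hφc n).aestronglyMeasurable.restrict
  have hbound : ∀ n, ∀ᵐ x ∂(volume.restrict (Set.Ioc a b)), ‖φ n x‖ ≤ (K:ℝ) := by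
    intro n
    refine Eventually.of_forall fun x => ?_
    have hd := hf.dist_le_mul (x + h n) x
    rw [Real.dist_eq, Real.dist_eq] at hd
    simp only [add_sub_cancel_left] at hd
    rw [hφ, Real.norm_eq_abs, abs_div, abs_of_pos (hpos n)]
    rw [div_le_iff₀ (hpos n)]
    simpa [abs_of_pos (hpos n)] using hd
  have hlim : ∀ᵐ x ∂(volume.restrict (Set.Ioc a b)),
      Tendsto (fun n => φ n x) atTop (𝓝 (deriv f x)) := by
    refine ae_restrict_of_ae ?_
    filter_upwards [hf.ae_differentiableAt] with x hx
    exact slope_seq hx.hasDerivAt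
  have key : Tendsto (fun n => ∫ x in Set.Ioc a b, φ n x) atTop
      (𝓝 (∫ x in Set.Ioc a b, deriv f x)) :=
    tendsto_integral_of_dominated_convergence _ hmeas
      (integrableOn_const measure_Ioc_lt_top.ne) hbound hlim
  -- compute the integrals of φ n
  set F : ℝ → ℝ := fun u => ∫ t in a..u, f t with hF
  have hInt : ∀ n, (∫ x in a..b, φ n x)
      = ((F (b + h n) - F b) - (F (a + h n) - F a)) / h n := by
    intro n
    have h1 : (∫ x in a..b, φ n x)
        = ((∫ x in a..b, f (x + h n)) - ∫ x in a..b, f x) / h n := by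
      rw [← intervalIntegral.integral_sub
        (Continuous.intervalIntegrable (by fun_prop) _ _)
        (hcont.intervalIntegrable _ _)]
      simp [hφ, intervalIntegral.integral_div]
    rw [h1, intervalIntegral.integral_comp_add_right]
    have h2 : (∫ x in a + h n..b + h n, f x)
        = F (b + h n) - F (a + h n) :=
      (intervalIntegral.integral_interval_sub_left
        (hcont.intervalIntegrable _ _) (hcont.intervalIntegrable _ _)).symm
    have h3 : (∫ x in a..b, f x) = F b - F a := by
      simp [hF, intervalIntegral.integral_same]
    rw [h2, h3]
    ring_nf
  have hFd : ∀ c : ℝ, HasDerivAt F (f c) c :=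
    fun c => (hcont.integral_hasStrictDerivAt a c).hasDerivAt
  have key2 : Tendsto (fun n => ∫ x in a..b, φ n x) atTop (𝓝 (f b - f a)) := by
    have hb' := slope_seq (hFd b)
    have ha' := slope_seq (hFd a)
    have := hb'.sub ha'
    refine Tendsto.congr (fun n => ?_) this
    rw [hInt n]
    simp only [hh]
    ring
  have hφint : ∀ n, (∫ x in a..b, φ n x) = ∫ x in Set.Ioc a b, φ n x :=
    fun n => intervalIntegral.integral_of_le hab
  have : Tendsto (fun n => ∫ x in a..b, φ n x) atTop
      (𝓝 (∫ x in Set.Ioc a b, deriv f x)) := by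
    simpa only [hφint] using key
  have := tendsto_nhds_unique this key2
  rw [intervalIntegral.integral_of_le hab, this]

lemma jensen6 {a b : ℝ} (hab : a < b) {g : ℝ → ℝ}
    (hg : IntegrableOn g (Set.Ioc a b)) (hg6 : IntegrableOn (fun x => g x ^ 6) (Set.Ioc a b)) :
    (∫ x in a..b, g x) ^ 6 ≤ (b - a) ^ 5 * ∫ x in a..b, g x ^ 6 := by
  set μ := volume.restrict (Set.Ioc a b) with hμ
  have hμuniv : μ Set.univ = ENNReal.ofReal (b - a) := by
    simp [hμ, Measure.restrict_apply_univ, Real.volume_Ioc]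
  haveI : IsFiniteMeasure μ := ⟨by rw [hμuniv]; exact ENNReal.ofReal_lt_top⟩
  haveI : NeZero μ := ⟨by
    intro h
    rw [h] at hμuniv
    have h0 : (0 : ENNReal) = ENNReal.ofReal (b - a) := by simpa using hμuniv
    have : (0:ℝ) < b - a := sub_pos.mpr hab
    rw [eq_comm, ENNReal.ofReal_eq_zero] at h0
    linarith⟩
  have hconv : ConvexOn ℝ Set.univ (fun y : ℝ => y ^ 6) := Even.convexOn_pow ⟨3, rfl⟩
  have hJ := hconv.map_average_le (continuous_pow 6).continuousOn isClosed_univ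
      (Eventually.of_forall fun _ => Set.mem_univ _) hg hg6
  have htr : (μ Set.univ).toReal = b - a := by
    rw [hμuniv, ENNReal.toReal_ofReal (by linarith)]
  rw [average_eq, average_eq, measureReal_def, htr] at hJ
  have hba : (0:ℝ) < b - a := sub_pos.mpr hab
  have hi1 : (∫ x, g x ∂μ) = ∫ x in a..b, g x :=
    (intervalIntegral.integral_of_le hab.le).symm
  have hi2 : (∫ x, g x ^ 6 ∂μ) = ∫ x in a..b, g x ^ 6 :=
    (intervalIntegral.integral_of_le hab.le).symm
  rw [hi1, hi2] at hJ
  set I := ∫ x in a..b, g x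
  set I6 := ∫ x in a..b, g x ^ 6
  simp only [smul_eq_mul] at hJ
  -- hJ : ((b-a)⁻¹ * I)^6 ≤ (b-a)⁻¹ * I6
  have h6 : ((b - a)⁻¹ * I) ^ 6 = (b - a)⁻¹ ^ 6 * I ^ 6 := by ring
  rw [h6] at hJ
  have := mul_le_mul_of_nonneg_left hJ (le_of_lt (pow_pos hba 6))
  calc I ^ 6 = (b - a) ^ 6 * ((b - a)⁻¹ ^ 6 * I ^ 6) := by
        field_simp
    _ ≤ (b - a) ^ 6 * ((b - a)⁻¹ * I6) := this
    _ = (b - a) ^ 5 * I6 := by field_simp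

lemma bounded_intervalIntegrable {g : ℝ → ℝ} (hm : AEStronglyMeasurable g volume)
    {C : ℝ} {c d : ℝ} (hb : ∀ x ∈ Set.uIcc c d, |g x| ≤ C) :
    IntervalIntegrable g volume c d := by
  rw [intervalIntegrable_iff, Set.uIoc]
  refine Measure.integrableOn_of_bounded (M := C) measure_Ioc_lt_top.ne hm ?_
  filter_upwards [ae_restrict_mem measurableSet_Ioc] with x hx
  have hx' : x ∈ Set.uIcc c d := by
    rw [Set.uIcc]
    exact Set.Ioc_subset_Icc_self hx
  simpa [Real.norm_eq_abs] using hb x hx'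

lemma mania_lower_bound {K : NNReal} {f : ℝ → ℝ} (hf : LipschitzWith K f)
    (h0 : f 0 = 0) (h1 : f 1 = 1) :
    49/8000000 ≤ ∫ x in (0:ℝ)..1, (f x ^ 3 - x) ^ 2 * deriv f x ^ 6 := by
  have hcont : Continuous f := hf.continuous
  have hK1 : (1:ℝ) ≤ K := by
    have := hf.dist_le_mul 1 0
    rw [Real.dist_eq, Real.dist_eq, h0, h1] at this
    simpa using this
  have hKpos : (0:ℝ) < K := by linarith
  have hfx : ∀ x : ℝ, |f x| ≤ (K:ℝ) * |x| := by
    intro x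
    have := hf.dist_le_mul x 0
    rw [Real.dist_eq, Real.dist_eq, h0, sub_zero, sub_zero] at this
    exact this
  set x0 : ℝ := 1/(9*(K:ℝ)^2) with hx0
  have hx0pos : 0 < x0 := by positivity
  have hx0le1 : x0 ≤ 1 := by
    rw [hx0, div_le_one (by positivity)]
    nlinarith
  have hsmall : ∀ x ∈ Set.Icc (0:ℝ) x0, f x ^ 3 ≤ x/8 := by
    rintro x ⟨hx1, hx2⟩
    rcases le_or_gt (f x) 0 with hneg | hpos
    · have : f x ^ 3 ≤ 0 := Odd.pow_nonpos ⟨1, rfl⟩ hneg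
      linarith
    · have hfb : f x ≤ (K:ℝ) * x := by
        have := hfx x
        rw [abs_of_nonneg hx1] at this
        exact (abs_le.mp this).2
      have h3 : f x ^ 3 ≤ ((K:ℝ) * x) ^ 3 := pow_le_pow_left₀ hpos.le hfb 3
      have h9 : 9*(K:ℝ)^2 * x ≤ 1 := by
        have h' : x ≤ 1/(9*(K:ℝ)^2) := hx0 ▸ hx2
        rw [le_div_iff₀ (by positivity : (0:ℝ) < 9*(K:ℝ)^2)] at h'
        linarith
      have h9nn : 0 ≤ 9*(K:ℝ)^2 * x := by positivity
      have h81 : 81*(K:ℝ)^4 * x^2 ≤ 1 := by nlinarith [h9, h9nn]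
      have hx3 : ((K:ℝ)*x)^3 ≤ x/8 := by
        nlinarith [mul_le_mul_of_nonneg_right h81 hx1, pow_nonneg hx1 3]
      linarith
  set φ : ℝ → ℝ := fun x => 8 * f x ^ 3 - x with hφ
  have hφc : Continuous φ := by fun_prop
  set A : Set ℝ := Set.Icc x0 1 ∩ φ ⁻¹' (Set.Ici 0) with hA
  have hA1 : (1:ℝ) ∈ A := ⟨⟨hx0le1, le_refl 1⟩, by simp [hφ, h1]⟩
  have hAne : A.Nonempty := ⟨1, hA1⟩
  have hAbdd : BddBelow A := ⟨x0, fun x hx => hx.1.1⟩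
  have hAclosed : IsClosed A := isClosed_Icc.inter (isClosed_Ici.preimage hφc)
  set b : ℝ := sInf A with hb
  have hbA : b ∈ A := hAclosed.csInf_mem hAne hAbdd
  have hx0b : x0 ≤ b := hbA.1.1
  have hb1 : b ≤ 1 := hbA.1.2
  have hbpos : 0 < b := lt_of_lt_of_le hx0pos hx0b
  have hφb : 0 ≤ φ b := hbA.2
  have hless : ∀ x ∈ Set.Ico x0 b, φ x < 0 := by
    rintro x ⟨hx1, hx2⟩
    by_contra hcon
    push_neg at hcon
    have hxA : x ∈ A := ⟨⟨hx1, le_trans hx2.le hb1⟩, hcon⟩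
    exact absurd (csInf_le hAbdd hxA) (not_le.mpr hx2)
  have hφb0 : φ b = 0 := by
    refine le_antisymm ?_ hφb
    rcases eq_or_lt_of_le hx0b with heq | hlt
    · have := hsmall x0 ⟨hx0pos.le, le_refl _⟩
      rw [← heq]
      simp only [hφ]
      linarith
    · have hev : ∀ᶠ x in 𝓝[<] b, φ x ≤ 0 := by
        filter_upwards [Ico_mem_nhdsLT hlt] with x hx
        exact (hless x hx).le
      exact le_of_tendsto ((hφc.tendsto b).mono_left nhdsWithin_le_nhds) hev
  have hcube : ∀ x ∈ Set.Icc (0:ℝ) b, f x ^ 3 ≤ x/8 := by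
    rintro x ⟨hx1, hx2⟩
    rcases le_or_gt x x0 with hc | hc
    · exact hsmall x ⟨hx1, hc⟩
    · rcases eq_or_lt_of_le hx2 with heq | hlt
      · rw [heq]; simp only [hφ] at hφb0; linarith
      · have := hless x ⟨hc.le, hlt⟩
        simp only [hφ] at this
        linarith
  set a : ℝ := b/2 with ha
  have hapos : 0 < a := by positivity
  have haltb : a < b := by rw [ha]; linarith
  set u : ℝ := f b with hu
  set v : ℝ := f a with hv
  have hu3 : u ^ 3 = b / 8 := by simp only [hφ] at hφb0; rw [hu]; linarith
  have hupos : 0 < u := by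
    rcases le_or_gt u 0 with hle | h
    · exfalso
      have : u ^ 3 ≤ 0 := Odd.pow_nonpos ⟨1, rfl⟩ hle
      rw [hu3] at this; linarith
    · exact h
  have hv3 : v ^ 3 ≤ b / 16 := by
    have := hcube a ⟨hapos.le, haltb.le⟩
    rw [ha] at this
    rw [hv, ha]; linarith
  have hvu : v ≤ (4/5) * u := by
    have hcube3 : v ^ 3 ≤ ((4/5) * u) ^ 3 := by nlinarith [hu3, hv3]
    by_contra hcon
    push_neg at hcon
    have := (Odd.strictMono_pow (R := ℝ) ⟨1, rfl⟩) hcon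
    simp only at this
    linarith
  set δ : ℝ := u - v with hδ
  have hδ5 : u/5 ≤ δ := by rw [hδ]; linarith
  have hδ6 : b^2/1000000 ≤ δ^6 := by
    have h1' : (u/5)^6 ≤ δ^6 := pow_le_pow_left₀ (by positivity) hδ5 6
    have h2' : (u/5)^6 = (u^3)^2/15625 := by ring
    rw [h2', hu3] at h1'
    nlinarith [h1']
  -- integrability
  have hdmeas : Measurable (deriv f) := measurable_deriv f
  have hdbd : ∀ x, |deriv f x| ≤ (K:ℝ) := by
    intro x
    simpa [Real.norm_eq_abs] using norm_deriv_le_of_lipschitz (𝕜 := ℝ) hf (x₀ := x)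
  have hint_d : ∀ c d : ℝ, IntervalIntegrable (deriv f) volume c d := fun c d =>
    bounded_intervalIntegrable hdmeas.aestronglyMeasurable (fun x _ => hdbd x)
  have hd6bd : ∀ x, |deriv f x ^ 6| ≤ (K:ℝ)^6 := by
    intro x
    rw [abs_pow]
    exact pow_le_pow_left₀ (abs_nonneg _) (hdbd x) 6
  have hint_d6 : ∀ c d : ℝ, IntervalIntegrable (fun x => deriv f x ^ 6) volume c d := fun c d =>
    bounded_intervalIntegrable (hdmeas.pow_const 6).aestronglyMeasurable (fun x _ => hd6bd x)
  set G : ℝ → ℝ := fun x => (f x ^ 3 - x) ^ 2 * deriv f x ^ 6 with hG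
  have hGmeas : AEStronglyMeasurable G volume :=
    ((((hcont.pow 3).sub continuous_id).pow 2).measurable.mul
      (hdmeas.pow_const 6)).aestronglyMeasurable
  have hGbd01 : ∀ x ∈ Set.Icc (0:ℝ) 1, |G x| ≤ ((K:ℝ)^3 + 1)^2 * (K:ℝ)^6 := by
    rintro x ⟨hx1, hx2⟩
    have hfb : |f x| ≤ (K:ℝ) := by
      have h' := hfx x
      rw [abs_of_nonneg hx1] at h'
      nlinarith [h']
    have hA3 : |f x ^ 3| ≤ (K:ℝ)^3 := by
      rw [abs_pow]
      exact pow_le_pow_left₀ (abs_nonneg _) hfb 3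
    have hAx : |x| ≤ 1 := by rw [abs_of_nonneg hx1]; exact hx2
    have h13 : |f x ^ 3 - x| ≤ (K:ℝ)^3 + 1 :=
      (abs_sub _ _).trans (add_le_add hA3 hAx)
    rw [hG]
    rw [abs_mul]
    have e1 : |(f x ^ 3 - x) ^ 2| ≤ ((K:ℝ)^3 + 1)^2 := by
      rw [abs_pow]
      exact pow_le_pow_left₀ (abs_nonneg _) h13 2
    exact mul_le_mul e1 (hd6bd x) (abs_nonneg _) (by positivity)
  have hint_G : ∀ c d : ℝ, c ∈ Set.Icc (0:ℝ) 1 → d ∈ Set.Icc (0:ℝ) 1 →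
      IntervalIntegrable G volume c d := by
    intro c d hc hd
    refine bounded_intervalIntegrable hGmeas (fun x hx => hGbd01 x ?_)
    have : Set.uIcc c d ⊆ Set.Icc (0:ℝ) 1 := Set.uIcc_subset_Icc hc hd
    exact this hx
  -- FTC and Jensen
  have hab01 : a ∈ Set.Icc (0:ℝ) 1 := ⟨hapos.le, by linarith⟩
  have hb01 : b ∈ Set.Icc (0:ℝ) 1 := ⟨hbpos.le, hb1⟩
  have hFTC : ∫ x in a..b, deriv f x = δ := by
    rw [lipschitz_integral_deriv hf haltb.le, hδ, hu, hv]
  set I6 : ℝ := ∫ x in a..b, deriv f x ^ 6 with hI6def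
  have hI6nonneg : 0 ≤ I6 :=
    intervalIntegral.integral_nonneg haltb.le (fun x _ => by positivity)
  have hJen : δ^6 ≤ (b - a)^5 * I6 := by
    have := jensen6 haltb ((intervalIntegrable_iff_integrableOn_Ioc_of_le haltb.le).mp (hint_d a b))
      ((intervalIntegrable_iff_integrableOn_Ioc_of_le haltb.le).mp (hint_d6 a b))
    rwa [hFTC] at this
  -- pointwise comparison on [a, b]
  have hptwise : ∀ x ∈ Set.Icc a b, 49/64*a^2 * deriv f x ^ 6 ≤ G x := by
    rintro x ⟨hx1, hx2⟩
    have hx0' : 0 ≤ x := le_trans hapos.le hx1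
    have hc := hcube x ⟨hx0', hx2⟩
    have h7 : 7*a/8 ≤ x - f x ^ 3 := by linarith
    have hsq : (7*a/8)^2 ≤ (x - f x ^ 3)^2 :=
      pow_le_pow_left₀ (by positivity) h7 2
    have he : (f x ^ 3 - x)^2 = (x - f x ^ 3)^2 := by ring
    have hd6 : 0 ≤ deriv f x ^ 6 := by positivity
    have hGx : G x = (f x ^ 3 - x)^2 * deriv f x ^ 6 := by rw [hG]
    calc 49/64*a^2 * deriv f x ^ 6 = (7*a/8)^2 * deriv f x ^ 6 := by ring
      _ ≤ (x - f x ^ 3)^2 * deriv f x ^ 6 := mul_le_mul_of_nonneg_right hsq hd6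
      _ = G x := by rw [hGx, he]
  have hmono : 49/64*a^2 * I6 ≤ ∫ x in a..b, G x := by
    have hci : IntervalIntegrable (fun x => 49/64*a^2 * deriv f x ^ 6) volume a b :=
      (hint_d6 a b).const_mul _
    have := intervalIntegral.integral_mono_on haltb.le hci
      (hint_G a b hab01 hb01) hptwise
    rwa [intervalIntegral.integral_const_mul] at this
  -- splitting [0,1]
  have hGnn : ∀ x, 0 ≤ G x := fun x => by rw [hG]; positivity
  have h01 : (0:ℝ) ∈ Set.Icc (0:ℝ) 1 := ⟨le_refl 0, zero_le_one⟩
  have h11 : (1:ℝ) ∈ Set.Icc (0:ℝ) 1 := ⟨zero_le_one, le_refl 1⟩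
  have hsplit : (∫ x in a..b, G x) ≤ ∫ x in (0:ℝ)..1, G x := by
    have e1 : (∫ x in (0:ℝ)..a, G x) + (∫ x in a..b, G x) = ∫ x in (0:ℝ)..b, G x :=
      intervalIntegral.integral_add_adjacent_intervals (hint_G 0 a h01 hab01)
        (hint_G a b hab01 hb01)
    have e2 : (∫ x in (0:ℝ)..b, G x) + (∫ x in b..1, G x) = ∫ x in (0:ℝ)..1, G x :=
      intervalIntegral.integral_add_adjacent_intervals (hint_G 0 b h01 hb01)
        (hint_G b 1 hb01 h11)
    have n1 : 0 ≤ ∫ x in (0:ℝ)..a, G x :=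
      intervalIntegral.integral_nonneg hapos.le (fun x _ => hGnn x)
    have n2 : 0 ≤ ∫ x in b..1, G x :=
      intervalIntegral.integral_nonneg hb1 (fun x _ => hGnn x)
    linarith
  -- final numeric computation
  have hJen' : b^2/1000000 ≤ (b/2)^5 * I6 := by
    have : b - a = b/2 := by rw [ha]; ring
    rw [this] at hJen
    linarith [hδ6, hJen]
  have h32 : 32 * b^2 ≤ (1000000 * b^3 * I6) * b^2 := by nlinarith [hJen']
  have hb3 : (32:ℝ) ≤ 1000000 * b^3 * I6 :=
    le_of_mul_le_mul_right h32 (by positivity)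
  have hbI : (32:ℝ)/1000000 ≤ b^2 * I6 := by
    have hble : b^3 * I6 ≤ b^2 * I6 := by nlinarith [hI6nonneg, hbpos, hb1]
    nlinarith [hb3, hble]
  have hfinal : 49/8000000 ≤ 49/64*a^2 * I6 := by
    have : 49/64*a^2 * I6 = 49/256 * (b^2 * I6) := by rw [ha]; ring
    rw [this]
    linarith [hbI]
  linarith [hfinal, hmono, hsplit]

lemma mania_nonneg (y : ℝ → ℝ) : 0 ≤ maniaFunctional y :=
  intervalIntegral.integral_nonneg zero_le_one (fun x _ => by positivity)

lemma mania_lip_bound (y : ℝ → ℝ) (hy : ∃ K : NNReal, LipschitzOnWith K y (Set.Icc (0:ℝ) 1))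
    (h0 : y 0 = 0) (h1 : y 1 = 1) : 49/8000000 ≤ maniaFunctional y := by
  obtain ⟨K, hK⟩ := hy
  obtain ⟨f, hfK, heq⟩ := hK.extend_real
  have hf0 : f 0 = 0 := by rw [← heq ⟨le_refl 0, zero_le_one⟩]; exact h0
  have hf1 : f 1 = 1 := by rw [← heq ⟨zero_le_one, le_refl 1⟩]; exact h1
  have hcongr : maniaFunctional y = ∫ x in (0:ℝ)..1, (f x ^ 3 - x) ^ 2 * deriv f x ^ 6 := by
    refine intervalIntegral.integral_congr_ae ?_
    have h1' : ∀ᵐ x : ℝ ∂volume, x ∉ ({1} : Set ℝ) :=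
      measure_eq_zero_iff_ae_notMem.mp Real.volume_singleton
    filter_upwards [h1'] with x hx hmem
    rw [Set.uIoc_of_le zero_le_one] at hmem
    have hxlt : x < 1 := lt_of_le_of_ne hmem.2 (by simpa using hx)
    have hnhds : Set.Icc (0:ℝ) 1 ∈ 𝓝 x := Icc_mem_nhds hmem.1 hxlt
    have hyf : y =ᶠ[𝓝 x] f := Filter.eventuallyEq_of_mem hnhds heq
    rw [hyf.self_of_nhds, hyf.deriv_eq]
  rw [hcongr]
  exact mania_lower_bound hfK hf0 hf1

noncomputable def cubeRoot : ℝ → ℝ := fun x => x ^ ((1:ℝ)/3)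

lemma cubeRoot_zero : cubeRoot 0 = 0 := by
  simp [cubeRoot, Real.zero_rpow (by norm_num : (1:ℝ)/3 ≠ 0)]

lemma cubeRoot_one : cubeRoot 1 = 1 := by simp [cubeRoot]

lemma cubeRoot_absCont : IsAbsContOnUnitInterval cubeRoot := by
  refine ⟨fun t => (1/3) * t ^ (-(2:ℝ)/3), ?_, ?_⟩
  · have h := intervalIntegral.intervalIntegrable_rpow' (a := 0) (b := 1) (r := -(2:ℝ)/3) (by norm_num)
    rw [intervalIntegrable_iff_integrableOn_Ioc_of_le zero_le_one] at h
    rw [← integrableOn_Icc_iff_integrableOn_Ioc] at h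
    exact h.const_mul _
  · rintro x ⟨hx1, hx2⟩
    rw [cubeRoot_zero]
    rw [intervalIntegral.integral_const_mul]
    rw [integral_rpow (Or.inl (by norm_num : (-1:ℝ) < -(2)/3))]
    have he : -(2:ℝ)/3 + 1 = 1/3 := by norm_num
    rw [he, Real.zero_rpow (by norm_num : (1:ℝ)/3 ≠ 0)]
    simp [cubeRoot]
    ring
  
lemma cubeRoot_mania : maniaFunctional cubeRoot = 0 := by
  have : EqOn (fun x => (cubeRoot x ^ 3 - x) ^ 2 * deriv cubeRoot x ^ 6) (fun _ => (0:ℝ))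
      (Set.uIcc (0:ℝ) 1) := by
    intro x hx
    rw [Set.uIcc_of_le zero_le_one] at hx
    have hcube : cubeRoot x ^ 3 = x := by
      rw [cubeRoot]
      rw [← Real.rpow_natCast (x ^ ((1:ℝ)/3)) 3, ← Real.rpow_mul hx.1]
      norm_num
    simp [hcube]
  rw [maniaFunctional, intervalIntegral.integral_congr this]
  simp

/-- The Manià example exhibits the Lavrentiev phenomenon: there is a constant `c > 0`
bounding `I[y]` from below for every Lipschitz admissible `y` (with `y 0 = 0`,
`y 1 = 1`), hence the infimum of `I` over Lipschitz admissible functions is strictly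
greater than the infimum over absolutely continuous admissible functions, which is `0`. -/
theorem mania_lavrentiev_phenomenon :
    (∃ c : ℝ, 0 < c ∧
      ∀ y : ℝ → ℝ, (∃ K : NNReal, LipschitzOnWith K y (Set.Icc (0:ℝ) 1)) →
        y 0 = 0 → y 1 = 1 → c ≤ maniaFunctional y) ∧
    sInf {r : ℝ | ∃ y : ℝ → ℝ, IsAbsContOnUnitInterval y ∧
      y 0 = 0 ∧ y 1 = 1 ∧ maniaFunctional y = r} = 0 ∧
    sInf {r : ℝ | ∃ y : ℝ → ℝ, IsAbsContOnUnitInterval y ∧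
        y 0 = 0 ∧ y 1 = 1 ∧ maniaFunctional y = r} <
      sInf {r : ℝ | ∃ y : ℝ → ℝ,
        (∃ K : NNReal, LipschitzOnWith K y (Set.Icc (0:ℝ) 1)) ∧
        y 0 = 0 ∧ y 1 = 1 ∧ maniaFunctional y = r} := by
  have h0mem : (0:ℝ) ∈ {r : ℝ | ∃ y : ℝ → ℝ, IsAbsContOnUnitInterval y ∧
      y 0 = 0 ∧ y 1 = 1 ∧ maniaFunctional y = r} :=
    ⟨cubeRoot, cubeRoot_absCont, cubeRoot_zero, cubeRoot_one, cubeRoot_mania⟩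
  have hlb : ∀ r ∈ {r : ℝ | ∃ y : ℝ → ℝ, IsAbsContOnUnitInterval y ∧
      y 0 = 0 ∧ y 1 = 1 ∧ maniaFunctional y = r}, (0:ℝ) ≤ r := by
    rintro r ⟨y, -, -, -, hr⟩
    exact hr ▸ mania_nonneg y
  have hSAC : sInf {r : ℝ | ∃ y : ℝ → ℝ, IsAbsContOnUnitInterval y ∧
      y 0 = 0 ∧ y 1 = 1 ∧ maniaFunctional y = r} = 0 :=
    le_antisymm (csInf_le ⟨0, hlb⟩ h0mem) (le_csInf ⟨0, h0mem⟩ hlb)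
  have hidmem : maniaFunctional id ∈ {r : ℝ | ∃ y : ℝ → ℝ,
      (∃ K : NNReal, LipschitzOnWith K y (Set.Icc (0:ℝ) 1)) ∧
      y 0 = 0 ∧ y 1 = 1 ∧ maniaFunctional y = r} :=
    ⟨id, ⟨1, by exact (LipschitzWith.id (α := ℝ)).lipschitzOnWith (s := Set.Icc (0:ℝ) 1)⟩, rfl, rfl, rfl⟩
  have hSL : (49/8000000 : ℝ) ≤ sInf {r : ℝ | ∃ y : ℝ → ℝ,
      (∃ K : NNReal, LipschitzOnWith K y (Set.Icc (0:ℝ) 1)) ∧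
      y 0 = 0 ∧ y 1 = 1 ∧ maniaFunctional y = r} := by
    refine le_csInf ⟨_, hidmem⟩ ?_
    rintro r ⟨y, hy, hy0, hy1, hr⟩
    exact hr ▸ mania_lip_bound y hy hy0 hy1
  refine ⟨⟨49/8000000, by norm_num, fun y hy h0 h1 => mania_lip_bound y hy h0 h1⟩, hSAC, ?_⟩
  rw [hSAC]
  exact lt_of_lt_of_le (by norm_num) hSL
end

section
/- For each integer n ≥ 1 let p_n : [0,1] → ℝ be the piecewise linear function with nodes x_i = i/n, i = 0, …, n, interpolating ŷ(x) = x^{1/3}; that is, p_n(i/n) = (i/n)^{1/3} for every i and p_n is affine on each subinterval [(i−1)/n, i/n]. Then each p_n is Lipschitz with p_n(0) = 0 and p_n(1) = 1, p_n converges to ŷ almost everywhere on [0,1], and I[p_n] → ∞ as n → ∞. -/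
open MeasureTheory Filter

lemma aux_pow3 {c : ℝ} (hc : 0 ≤ c) : (c ^ (1/3:ℝ)) ^ (3:ℕ) = c := by
  rw [← Real.rpow_natCast (c ^ (1/3:ℝ)) 3, ← Real.rpow_mul hc]
  norm_num

lemma aux_cuberoot_sub {a b : ℝ} (ha : 0 ≤ a) (hab : a ≤ b) :
    b ^ (1/3:ℝ) - a ^ (1/3:ℝ) ≤ (b - a) ^ (1/3:ℝ) := by
  have hb : 0 ≤ b := ha.trans hab
  have hba : 0 ≤ b - a := sub_nonneg.2 hab
  have hx : 0 ≤ (b - a) ^ (1/3:ℝ) := Real.rpow_nonneg hba _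
  have hy : 0 ≤ a ^ (1/3:ℝ) := Real.rpow_nonneg ha _
  have hsum : b ≤ ((b - a) ^ (1/3:ℝ) + a ^ (1/3:ℝ)) ^ (3:ℕ) := by
    have h1 := aux_pow3 hba
    have h2 := aux_pow3 ha
    nlinarith [mul_nonneg hx hy, mul_nonneg (mul_nonneg hx hx) hy,
      mul_nonneg (mul_nonneg hx hy) hy]
  have h3 := Real.rpow_le_rpow hb hsum (by norm_num : (0:ℝ) ≤ 1/3)
  rw [← Real.rpow_natCast ((b - a) ^ (1/3:ℝ) + a ^ (1/3:ℝ)) 3,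
    ← Real.rpow_mul (by positivity)] at h3
  norm_num at h3
  linarith

lemma aux_deriv_affine (a b x : ℝ) : deriv (fun y : ℝ => a*y + b) x = a := by
  have : HasDerivAt (fun y : ℝ => a*y + b) a x := by
    simpa using ((hasDerivAt_id x).const_mul a).add_const b
  exact this.deriv

/-- Structured form of each affine segment. -/
lemma aux_seg (p : ℕ → ℝ → ℝ)
    (hnodes : ∀ n : ℕ, 1 ≤ n → ∀ i ≤ n,
      p n ((i : ℝ) / (n : ℝ)) = ((i : ℝ) / (n : ℝ)) ^ (1/3 : ℝ))
    (haffine : ∀ n : ℕ, 1 ≤ n → ∀ i : ℕ, 1 ≤ i → i ≤ n → ∃ a b : ℝ,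
      ∀ x ∈ Set.Icc (((i : ℝ) - 1) / (n : ℝ)) ((i : ℝ) / (n : ℝ)), p n x = a * x + b)
    (n : ℕ) (hn : 1 ≤ n) (i : ℕ) (hi1 : 1 ≤ i) (hin : i ≤ n) :
    ∃ a b : ℝ,
      (∀ x ∈ Set.Icc (((i : ℝ) - 1) / (n : ℝ)) ((i : ℝ) / (n : ℝ)), p n x = a * x + b) ∧
      (a * (((i:ℝ) - 1) / n) + b = (((i:ℝ) - 1)/(n:ℝ)) ^ (1/3:ℝ)) ∧
      (a * ((i:ℝ) / n) + b = ((i : ℝ)/(n:ℝ)) ^ (1/3:ℝ)) ∧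
      a = n * (((i : ℝ)/(n:ℝ)) ^ (1/3:ℝ) - (((i:ℝ) - 1)/(n:ℝ)) ^ (1/3:ℝ)) := by
  have hn0 : (0:ℝ) < n := by exact_mod_cast hn
  obtain ⟨a, b, hab⟩ := haffine n hn i hi1 hin
  have hle : ((i:ℝ) - 1) / n ≤ (i:ℝ) / n := by
    gcongr
    linarith
  have h0 : a * (((i:ℝ) - 1) / n) + b = (((i:ℝ) - 1)/(n:ℝ)) ^ (1/3:ℝ) := by
    have hm : ((i:ℝ) - 1) / n ∈ Set.Icc (((i : ℝ) - 1) / (n : ℝ)) ((i : ℝ) / (n : ℝ)) :=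
      ⟨le_refl _, hle⟩
    have := hnodes n hn (i - 1) (by omega)
    rw [← hab _ hm]
    have hc : ((i - 1 : ℕ) : ℝ) = (i:ℝ) - 1 := by
      push_cast [Nat.cast_sub hi1]; ring
    rw [hc] at this
    exact this
  have h1 : a * ((i:ℝ) / n) + b = ((i : ℝ)/(n:ℝ)) ^ (1/3:ℝ) := by
    have hm : (i:ℝ) / n ∈ Set.Icc (((i : ℝ) - 1) / (n : ℝ)) ((i : ℝ) / (n : ℝ)) :=
      ⟨hle, le_refl _⟩
    rw [← hab _ hm]
    exact hnodes n hn i hin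
  refine ⟨a, b, hab, h0, h1, ?_⟩
  have hdiff : a * ((i:ℝ)/n) - a * (((i:ℝ) - 1)/n) =
      ((i : ℝ)/(n:ℝ)) ^ (1/3:ℝ) - (((i:ℝ) - 1)/(n:ℝ)) ^ (1/3:ℝ) := by linarith
  have : a * (1/n) = ((i : ℝ)/(n:ℝ)) ^ (1/3:ℝ) - (((i:ℝ) - 1)/(n:ℝ)) ^ (1/3:ℝ) := by
    rw [← hdiff]; field_simp; ring
  field_simp at this
  linarith [this]


lemma aux_ae_eq (q : ℝ → ℝ) (a b l r : ℝ) (hlr : l ≤ r)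
    (hq : ∀ x ∈ Set.Icc l r, q x = a * x + b) :
    ∀ᵐ x ∂(volume : Measure ℝ), x ∈ Set.uIoc l r →
      ((a*x+b)^3 - x)^2 * a^6 = (q x ^ 3 - x)^2 * deriv q x ^ 6 := by
  have hner : ∀ᵐ x ∂(volume : Measure ℝ), x ≠ r := by
    rw [ae_iff]
    have : {x : ℝ | ¬ x ≠ r} = {r} := by ext x; simp
    rw [this]
    exact Real.volume_singleton
  filter_upwards [hner] with x hxr hx
  rw [Set.uIoc_of_le hlr] at hx
  have hIoo : x ∈ Set.Ioo l r := ⟨hx.1, lt_of_le_of_ne hx.2 hxr⟩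
  have hderiv : deriv q x = a := by
    have heq : q =ᶠ[nhds x] (fun y => a * y + b) :=
      Filter.eventually_of_mem (isOpen_Ioo.mem_nhds hIoo)
        (fun y hy => hq y (Set.Ioo_subset_Icc_self hy))
    rw [heq.deriv_eq, aux_deriv_affine]
  rw [hderiv, hq x (Set.Ioo_subset_Icc_self hIoo)]

set_option maxHeartbeats 1000000 in
/-- For `n ≥ 1`, let `p n` be the piecewise linear function with nodes `x_i = i/n`
interpolating `ŷ(x) = x^(1/3)`: `p n (i/n) = (i/n)^(1/3)` for `i = 0, …, n`, and `p n`
is affine on each subinterval `[(i-1)/n, i/n]`. Then each `p n` is Lipschitz on `[0,1]`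
with `p n 0 = 0` and `p n 1 = 1`, `p n` converges to `ŷ` almost everywhere on `[0,1]`,
and `I[p n] → ∞` as `n → ∞`. -/
theorem mania_piecewise_linear_interpolants
    (p : ℕ → ℝ → ℝ)
    (hnodes : ∀ n : ℕ, 1 ≤ n → ∀ i ≤ n,
      p n ((i : ℝ) / (n : ℝ)) = ((i : ℝ) / (n : ℝ)) ^ (1/3 : ℝ))
    (haffine : ∀ n : ℕ, 1 ≤ n → ∀ i : ℕ, 1 ≤ i → i ≤ n → ∃ a b : ℝ,
      ∀ x ∈ Set.Icc (((i : ℝ) - 1) / (n : ℝ)) ((i : ℝ) / (n : ℝ)), p n x = a * x + b) :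
    (∀ n, 1 ≤ n →
      (∃ K : NNReal, LipschitzOnWith K (p n) (Set.Icc (0:ℝ) 1)) ∧
      p n 0 = 0 ∧ p n 1 = 1) ∧
    (∀ᵐ x ∂(volume.restrict (Set.Icc (0:ℝ) 1)),
      Tendsto (fun n => p n x) atTop (nhds (x ^ (1/3 : ℝ)))) ∧
    Tendsto (fun n => maniaFunctional (p n)) atTop atTop := by
  have hnR : ∀ n : ℕ, 1 ≤ n → (0:ℝ) < n := fun n hn => by exact_mod_cast hn
  -- boundary values
  have hp0 : ∀ n, 1 ≤ n → p n 0 = 0 := by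
    intro n hn
    have h := hnodes n hn 0 (by omega)
    simpa [Real.zero_rpow (by norm_num : (1/3:ℝ) ≠ 0)] using h
  have hp1 : ∀ n, 1 ≤ n → p n 1 = 1 := by
    intro n hn
    have h := hnodes n hn n le_rfl
    rw [div_self (hnR n hn).ne'] at h
    simpa using h
  -- packaged segment data with bounds
  have segbound : ∀ n, 1 ≤ n → ∀ i : ℕ, 1 ≤ i → i ≤ n →
      ∃ a b : ℝ,
        (∀ x ∈ Set.Icc (((i:ℝ) - 1) / (n:ℝ)) ((i:ℝ) / (n:ℝ)), p n x = a * x + b) ∧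
        0 ≤ a ∧ a ≤ n ∧
        (∀ x ∈ Set.Icc (((i:ℝ) - 1) / (n:ℝ)) ((i:ℝ) / (n:ℝ)),
          (((i:ℝ) - 1)/(n:ℝ)) ^ (1/3:ℝ) ≤ p n x ∧ p n x ≤ ((i:ℝ)/(n:ℝ)) ^ (1/3:ℝ)) := by
    intro n hn i hi1 hin
    obtain ⟨a, b, hab, h0, h1, ha⟩ := aux_seg p hnodes haffine n hn i hi1 hin
    have hn0 := hnR n hn
    have hi1R : (1:ℝ) ≤ (i:ℝ) := by exact_mod_cast hi1
    have hinR : (i:ℝ) ≤ (n:ℝ) := by exact_mod_cast hin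
    have hx0 : (0:ℝ) ≤ ((i:ℝ) - 1) / n := div_nonneg (by linarith) hn0.le
    have hx1 : ((i:ℝ)) / n ≤ 1 := by
      rw [div_le_one hn0]; exact hinR
    have hf0 : (0:ℝ) ≤ (((i:ℝ) - 1)/(n:ℝ)) ^ (1/3:ℝ) := Real.rpow_nonneg hx0 _
    have hff : (((i:ℝ) - 1)/(n:ℝ)) ^ (1/3:ℝ) ≤ ((i:ℝ)/(n:ℝ)) ^ (1/3:ℝ) := by
      apply Real.rpow_le_rpow hx0 ?_ (by norm_num)
      gcongr
      linarith
    have hf1 : ((i:ℝ)/(n:ℝ)) ^ (1/3:ℝ) ≤ 1 := by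
      apply Real.rpow_le_one (by positivity) hx1 (by norm_num)
    have hanneg : 0 ≤ a := by
      rw [ha]
      have : 0 ≤ ((i:ℝ)/(n:ℝ)) ^ (1/3:ℝ) - (((i:ℝ) - 1)/(n:ℝ)) ^ (1/3:ℝ) := by linarith
      positivity
    refine ⟨a, b, hab, hanneg, ?_, ?_⟩
    · rw [ha]
      nlinarith
    · intro x hx
      rw [hab x hx]
      constructor
      · nlinarith [hx.1]
      · nlinarith [hx.2]
  -- the Lipschitz estimate with constant n, by induction on the node index
  have lip : ∀ n, 1 ≤ n → ∀ k : ℕ, k ≤ n →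
      ∀ x ∈ Set.Icc (0:ℝ) ((k:ℝ)/(n:ℝ)), ∀ y ∈ Set.Icc (0:ℝ) ((k:ℝ)/(n:ℝ)),
        |p n x - p n y| ≤ n * |x - y| := by
    intro n hn k
    have hn0 := hnR n hn
    induction k with
    | zero =>
      intro _ x hx y hy
      simp only [Nat.cast_zero, zero_div, Set.Icc_self, Set.mem_singleton_iff] at hx hy
      subst hx; subst hy; simp
    | succ k ih =>
      intro hk x hx y hy
      have ihk := ih (by omega)
      wlog hxy : x ≤ y generalizing x y
      · rw [abs_sub_comm (p n x), abs_sub_comm x]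
        exact this y hy x hx (by linarith [le_of_not_ge hxy])
      obtain ⟨a, b, hab, ha0, han, _⟩ := segbound n hn (k+1) (by omega) hk
      have hcast : (((k+1:ℕ)):ℝ) = (k:ℝ) + 1 := by push_cast; ring
      rw [hcast] at hx hy
      have habm : ∀ z ∈ Set.Icc ((k:ℝ)/(n:ℝ)) (((k:ℝ)+1)/(n:ℝ)), p n z = a * z + b := by
        intro z hz
        apply hab
        constructor
        · have : ((k:ℝ) + 1) - 1 = (k:ℝ) := by ring
          push_cast
          rw [show (((k:ℕ):ℝ) + 1 - 1) = ((k:ℕ):ℝ) by ring]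
          exact hz.1
        · push_cast
          exact hz.2
      have hm0 : (0:ℝ) ≤ (k:ℝ)/(n:ℝ) := by positivity
      have hmle : (k:ℝ)/(n:ℝ) ≤ ((k:ℝ)+1)/(n:ℝ) := by gcongr; linarith
      rcases le_or_gt y ((k:ℝ)/(n:ℝ)) with hylek | hygt
      · exact ihk x ⟨hx.1, le_trans hxy hylek⟩ y ⟨hy.1, hylek⟩
      · rcases le_or_gt x ((k:ℝ)/(n:ℝ)) with hxlek | hxgt
        · -- split at m = k/n
          have h1 := ihk x ⟨hx.1, hxlek⟩ ((k:ℝ)/(n:ℝ)) ⟨hm0, le_refl _⟩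
          have hpy := habm y ⟨hygt.le, hy.2⟩
          have hpm := habm ((k:ℝ)/(n:ℝ)) ⟨le_refl _, hmle⟩
          have h2 : |p n ((k:ℝ)/(n:ℝ)) - p n y| ≤ n * ((y - (k:ℝ)/(n:ℝ))) := by
            rw [hpy, hpm]
            rw [show a * ((k:ℝ)/(n:ℝ)) + b - (a * y + b) = -(a * (y - (k:ℝ)/(n:ℝ))) by ring,
              abs_neg, abs_of_nonneg (by nlinarith)]
            nlinarith
          calc |p n x - p n y| ≤ |p n x - p n ((k:ℝ)/(n:ℝ))| + |p n ((k:ℝ)/(n:ℝ)) - p n y| :=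
                abs_sub_le _ _ _
            _ ≤ n * |x - (k:ℝ)/(n:ℝ)| + n * (y - (k:ℝ)/(n:ℝ)) := by linarith
            _ ≤ n * |x - y| := by
                rw [abs_of_nonpos (by linarith), abs_of_nonpos (by linarith)]
                nlinarith
        · -- both in the same segment
          have hpx := habm x ⟨hxgt.le, hx.2⟩
          have hpy := habm y ⟨hygt.le, hy.2⟩
          rw [hpx, hpy, show a * x + b - (a * y + b) = -(a * (y - x)) by ring, abs_neg,
            abs_of_nonneg (by nlinarith), abs_of_nonpos (by linarith)]
          nlinarith
  -- part 1
  refine ⟨?_, ?_, ?_⟩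
  · intro n hn
    refine ⟨⟨⟨(n:ℝ), (hnR n hn).le⟩, ?_⟩, hp0 n hn, hp1 n hn⟩
    apply LipschitzOnWith.of_dist_le_mul
    intro x hx y hy
    have h := lip n hn n le_rfl x (by rwa [div_self (hnR n hn).ne']) y
      (by rwa [div_self (hnR n hn).ne'])
    rw [Real.dist_eq, Real.dist_eq]
    exact h
  · -- a.e. convergence
    have conv : ∀ x ∈ Set.Icc (0:ℝ) 1, ∀ n : ℕ, 1 ≤ n →
        |p n x - x ^ (1/3:ℝ)| ≤ ((1:ℝ)/(n:ℝ)) ^ (1/3:ℝ) := by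
      intro x hx n hn
      have hn0 := hnR n hn
      set i : ℕ := max 1 ⌈(n:ℝ) * x⌉₊ with hidef
      have hi1 : 1 ≤ i := le_max_left _ _
      have hin : i ≤ n := by
        apply max_le hn
        rw [Nat.ceil_le]
        nlinarith [hx.1, hx.2]
      have hxu : x ≤ (i:ℝ)/(n:ℝ) := by
        rw [le_div_iff₀ hn0]
        have h1 : (n:ℝ) * x ≤ (⌈(n:ℝ) * x⌉₊ : ℝ) := Nat.le_ceil _
        have h2 : (⌈(n:ℝ) * x⌉₊ : ℝ) ≤ (i:ℝ) := by exact_mod_cast le_max_right 1 _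
        linarith
      have hxl : ((i:ℝ) - 1)/(n:ℝ) ≤ x := by
        rw [div_le_iff₀ hn0]
        have : (i:ℝ) - 1 ≤ (n:ℝ) * x := by
          rcases le_or_gt (⌈(n:ℝ) * x⌉₊) 1 with hc | hc
          · have : i = 1 := by omega
            rw [this]
            have := hx.1
            simp only [Nat.cast_one]
            nlinarith
          · have hieq : i = ⌈(n:ℝ) * x⌉₊ := by omega
            have := Nat.ceil_lt_add_one (by nlinarith [hx.1] : (0:ℝ) ≤ (n:ℝ) * x)
            rw [hieq]
            linarith
        linarith
      obtain ⟨a, b, hab, ha0, han, hval⟩ := segbound n hn i hi1 hin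
      have hpm := hval x ⟨hxl, hxu⟩
      have hx0 : (0:ℝ) ≤ ((i:ℝ) - 1) / (n:ℝ) := by
        apply div_nonneg ?_ hn0.le
        have : (1:ℝ) ≤ (i:ℝ) := by exact_mod_cast hi1
        linarith
      have hxm1 : (((i:ℝ) - 1)/(n:ℝ)) ^ (1/3:ℝ) ≤ x ^ (1/3:ℝ) :=
        Real.rpow_le_rpow hx0 hxl (by norm_num)
      have hxm2 : x ^ (1/3:ℝ) ≤ ((i:ℝ)/(n:ℝ)) ^ (1/3:ℝ) :=
        Real.rpow_le_rpow (le_trans hx0 hxl) hxu (by norm_num)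
      have hgap : ((i:ℝ)/(n:ℝ)) ^ (1/3:ℝ) - (((i:ℝ) - 1)/(n:ℝ)) ^ (1/3:ℝ) ≤
          ((1:ℝ)/(n:ℝ)) ^ (1/3:ℝ) := by
        have hle : ((i:ℝ) - 1)/(n:ℝ) ≤ (i:ℝ)/(n:ℝ) := by gcongr <;> linarith
        have h := aux_cuberoot_sub hx0 hle
        have heq : (i:ℝ)/(n:ℝ) - ((i:ℝ) - 1)/(n:ℝ) = 1/(n:ℝ) := by
          field_simp
          ring
        rwa [heq] at h
      rw [abs_le]
      constructor <;> nlinarith [hpm.1, hpm.2]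
    refine (ae_restrict_mem measurableSet_Icc).mono (fun x hx => ?_)
    have hb : Tendsto (fun n : ℕ => ((1:ℝ)/(n:ℝ)) ^ (1/3:ℝ)) atTop (nhds 0) := by
      have h1 : Tendsto (fun n : ℕ => (1:ℝ)/(n:ℝ)) atTop (nhds 0) :=
        tendsto_one_div_atTop_nhds_zero_nat
      have h2 : ContinuousAt (fun y : ℝ => y ^ (1/3:ℝ)) 0 :=
        Real.continuousAt_rpow_const 0 _ (Or.inr (by norm_num))
      have h3 := h2.tendsto.comp h1
      simpa [Real.zero_rpow (by norm_num : (1/3:ℝ) ≠ 0), Function.comp_def] using h3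
    rw [tendsto_iff_dist_tendsto_zero]
    apply squeeze_zero' (Filter.Eventually.of_forall (fun n => dist_nonneg))
      ?_ hb
    filter_upwards [eventually_ge_atTop 1] with n hn
    rw [Real.dist_eq]
    exact conv x hx n hn
  · -- blow-up of the functional
    have hint : ∀ n, 1 ≤ n → ∀ k : ℕ, k ≤ n →
        IntervalIntegrable (fun x => (p n x ^ 3 - x) ^ 2 * deriv (p n) x ^ 6)
          volume 0 ((k:ℝ)/(n:ℝ)) := by
      intro n hn k
      have hn0 := hnR n hn
      induction k with
      | zero => intro _; simp only [Nat.cast_zero, zero_div]; exact IntervalIntegrable.refl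
      | succ k ih =>
        intro hk
        have ihk := ih (by omega)
        have hstep : IntervalIntegrable (fun x => (p n x ^ 3 - x) ^ 2 * deriv (p n) x ^ 6)
            volume ((k:ℝ)/(n:ℝ)) (((k+1:ℕ):ℝ)/(n:ℝ)) := by
          obtain ⟨a, b, hab, _, _, _⟩ := segbound n hn (k+1) (by omega) hk
          have hab' : ∀ x ∈ Set.Icc ((k:ℝ)/(n:ℝ)) (((k+1:ℕ):ℝ)/(n:ℝ)), p n x = a * x + b := by
            intro x hx
            apply hab
            push_cast at hx ⊢
            constructor
            · rw [show ((k:ℝ) + 1 - 1) = (k:ℝ) by ring]; exact hx.1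
            · exact hx.2
          have hlr : (k:ℝ)/(n:ℝ) ≤ ((k+1:ℕ):ℝ)/(n:ℝ) := by
            gcongr
            push_cast; linarith
          have hg : IntervalIntegrable (fun x => ((a*x+b)^3 - x)^2 * a^6)
              volume ((k:ℝ)/(n:ℝ)) (((k+1:ℕ):ℝ)/(n:ℝ)) := by
            apply Continuous.intervalIntegrable
            fun_prop
          apply hg.congr_ae
          rw [Filter.EventuallyEq, ae_restrict_iff' measurableSet_uIoc]
          exact aux_ae_eq (p n) a b _ _ hlr hab'
        exact ihk.trans hstep
    have hlow : ∀ n : ℕ, 1 ≤ n → 8*(n:ℝ)/105 ≤ maniaFunctional (p n) := by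
      intro n hn
      have hn0 := hnR n hn
      obtain ⟨a, b, hab, h0, h1, ha⟩ := aux_seg p hnodes haffine n hn 1 le_rfl hn
      have hab' : ∀ x ∈ Set.Icc (0:ℝ) (1/(n:ℝ)), p n x = a * x + b := by
        intro x hx
        apply hab
        push_cast
        rw [show ((1:ℝ) - 1) = 0 by ring]
        simpa using hx
      have hb0 : b = 0 := by
        rw [show (((1:ℕ):ℝ) - 1) / (n:ℝ) = 0 by push_cast; ring] at h0
        rw [Real.zero_rpow (by norm_num : (1/3:ℝ) ≠ 0)] at h0
        linarith [h0]
      have ha3 : a^3 = (n:ℝ)^2 := by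
        rw [ha]
        rw [show (((1:ℕ):ℝ) - 1) / (n:ℝ) = 0 by push_cast; ring,
          Real.zero_rpow (by norm_num : (1/3:ℝ) ≠ 0)]
        have h3 : ((((1:ℕ):ℝ)/(n:ℝ)) ^ (1/3:ℝ))^(3:ℕ) = ((1:ℕ):ℝ)/(n:ℝ) :=
          aux_pow3 (by positivity)
        push_cast at h3 ⊢
        rw [mul_pow, sub_zero, h3]
        field_simp
      have ha6 : a^6 = (n:ℝ)^4 := by
        have : a^6 = (a^3)^2 := by ring
        rw [this, ha3]; ring
      have hlr : (0:ℝ) ≤ 1/(n:ℝ) := by positivity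
      have key : ∀ x : ℝ, ((a*x+b)^3 - x)^2 * a^6 =
          (a^3)^4 * x^6 - 2*(a^3)^3 * x^4 + (a^3)^2 * x^2 := by
        intro x; rw [hb0]; ring
      have hval : ∫ x in (0:ℝ)..(1/(n:ℝ)), ((a*x+b)^3 - x)^2 * a^6 = 8*(n:ℝ)/105 := by
        simp_rw [key, ha3]
        have i1 : IntervalIntegrable (fun x:ℝ => ((n:ℝ)^2)^4 * x^6) volume 0 (1/(n:ℝ)) :=
          (Continuous.intervalIntegrable (by fun_prop) _ _)
        have i2 : IntervalIntegrable (fun x:ℝ => 2*((n:ℝ)^2)^3 * x^4) volume 0 (1/(n:ℝ)) :=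
          (Continuous.intervalIntegrable (by fun_prop) _ _)
        have i3 : IntervalIntegrable (fun x:ℝ => ((n:ℝ)^2)^2 * x^2) volume 0 (1/(n:ℝ)) :=
          (Continuous.intervalIntegrable (by fun_prop) _ _)
        rw [show (fun x:ℝ => ((n:ℝ)^2)^4 * x^6 - 2*((n:ℝ)^2)^3 * x^4 + ((n:ℝ)^2)^2 * x^2) =
          (fun x:ℝ => (((n:ℝ)^2)^4 * x^6 - 2*((n:ℝ)^2)^3 * x^4) + ((n:ℝ)^2)^2 * x^2) from rfl]
        rw [intervalIntegral.integral_add (i1.sub i2) i3, intervalIntegral.integral_sub i1 i2]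
        simp_rw [mul_assoc]
        simp only [intervalIntegral.integral_const_mul, integral_pow]
        field_simp
        ring_nf
        simp only [← mul_pow, mul_inv_cancel₀ hn0.ne', one_pow]
        norm_num
      have haeq : ∫ x in (0:ℝ)..(1/(n:ℝ)), (p n x ^ 3 - x) ^ 2 * deriv (p n) x ^ 6 =
          ∫ x in (0:ℝ)..(1/(n:ℝ)), ((a*x+b)^3 - x)^2 * a^6 :=
        (intervalIntegral.integral_congr_ae (aux_ae_eq (p n) a b 0 (1/(n:ℝ)) hlr hab')).symm
      have h1int : IntervalIntegrable (fun x => (p n x ^ 3 - x) ^ 2 * deriv (p n) x ^ 6)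
          volume 0 (1/(n:ℝ)) := by
        have := hint n hn 1 hn
        simpa using this
      have h2int : IntervalIntegrable (fun x => (p n x ^ 3 - x) ^ 2 * deriv (p n) x ^ 6)
          volume (1/(n:ℝ)) 1 := by
        have hall := hint n hn n le_rfl
        rw [div_self hn0.ne'] at hall
        apply hall.mono_set
        have h1n : 1/(n:ℝ) ≤ 1 := by rw [div_le_one hn0]; exact_mod_cast hn
        rw [Set.uIcc_of_le h1n, Set.uIcc_of_le (by norm_num : (0:ℝ) ≤ 1)]
        exact Set.Icc_subset_Icc hlr (le_refl _)
      have hsplit : maniaFunctional (p n) =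
          (∫ x in (0:ℝ)..(1/(n:ℝ)), (p n x ^ 3 - x) ^ 2 * deriv (p n) x ^ 6) +
          ∫ x in (1/(n:ℝ))..1, (p n x ^ 3 - x) ^ 2 * deriv (p n) x ^ 6 :=
        (intervalIntegral.integral_add_adjacent_intervals h1int h2int).symm
      have hnn : 0 ≤ ∫ x in (1/(n:ℝ))..1, (p n x ^ 3 - x) ^ 2 * deriv (p n) x ^ 6 := by
        apply intervalIntegral.integral_nonneg
        · rw [div_le_one hn0]; exact_mod_cast hn
        · intro u _; positivity
      rw [hsplit, haeq, hval]
      linarith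
    have htend : Tendsto (fun n : ℕ => 8*(n:ℝ)/105) atTop atTop := by
      apply Tendsto.atTop_div_const (by norm_num : (0:ℝ) < 105)
      exact Tendsto.const_mul_atTop (by norm_num : (0:ℝ) < 8) tendsto_natCast_atTop_atTop
    apply tendsto_atTop_mono' atTop ?_ htend
    filter_upwards [eventually_ge_atTop 1] with n hn
    exact hlow n hn
end
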